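/- arXiv:2504.21551 — 7 statements merged into one kernel-verified Lean document; each statement's English description precedes it below -/
import Mathlib

section
/- Let a < b be real numbers. Then the closed interval [a,b] ⊆ ℝ, equipped with the midpoint operation x ⊕ y = (x+y)/2 and the two points a and b, is an interval object in the category of sets: (1) ([a,b], ⊕) is a cancellative iterative midpoint set, and (2) for every cancellative iterative midpoint set (A, m) and every pair of points x, y ∈ A there is a unique midpoint homomorphism h : [a,b] → A with h(a) = x and h(b) = y. -/
/-- A midpoint operation: idempotent, commutative, satisfying transposition. -/
def IsMidpoint {A : Type} (m : A → A → A) : Prop :=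
  (∀ x, m x x = x) ∧ (∀ x y, m x y = m y x) ∧
    (∀ x y z w, m (m x y) (m z w) = m (m x z) (m y w))

/-- Cancellation: `m x y = m x z` implies `y = z`. -/
def Cancellative {A : Type} (m : A → A → A) : Prop :=
  ∀ x y z, m x y = m x z → y = z

/-- Iterativity in the category of sets. -/
def Iterative {A : Type} (m : A → A → A) : Prop :=
  ∀ (X : Type) (c : X → A × X), ∃! u : X → A, ∀ x, u x = m (c x).1 (u (c x).2)

/-- The midpoint operation `x ⊕ y = (x+y)/2` on the closed interval `[a,b]`. -/
noncomputable def iccMid (a b : ℝ) (x y : Set.Icc a b) : Set.Icc a b :=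
  ⟨(x.1 + y.1) / 2,
    ⟨by have h1 := x.2.1; have h2 := y.2.1; linarith,
     by have h1 := x.2.2; have h2 := y.2.2; linarith⟩⟩

theorem icc_iterative (a b : ℝ) (hab : a ≤ b) : Iterative (iccMid a b) := by
  intro X c
  set S : X → X := fun x => (c x).2 with hS
  set g : X → ℕ → ℝ := fun x n => ((c (S^[n] x)).1 : ℝ) with hg
  have hga : ∀ x n, a ≤ g x n := fun x n => (c (S^[n] x)).1.2.1
  have hgb : ∀ x n, g x n ≤ b := fun x n => (c (S^[n] x)).1.2.2
  have hsum : ∀ (h : ℕ → ℝ), (∀ n, a ≤ h n) → (∀ n, h n ≤ b) →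
      Summable (fun n => h n / 2 / 2 ^ n) := by
    intro h h1 h2
    apply Summable.of_norm_bounded
      (summable_geometric_two' (|a| + |b|))
    intro n
    have p2 : (0:ℝ) < 2 ^ n := by positivity
    have : |h n| ≤ |a| + |b| := by
      have := le_abs_self b; have := neg_abs_le a
      have := abs_nonneg a; have := abs_nonneg b
      rw [abs_le]; constructor <;> nlinarith [h1 n, h2 n]
    have a2 : |(2:ℝ)| = 2 := by norm_num
    rw [Real.norm_eq_abs, abs_div, abs_div, abs_of_pos p2, a2]
    gcongr
  set U : X → ℝ := fun x => ∑' n, g x n / 2 / 2 ^ n with hU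
  have hUa : ∀ x, a ≤ U x := by
    intro x
    have := tsum_geometric_two' a
    rw [hU]
    calc a = ∑' n : ℕ, a / 2 / 2 ^ n := (tsum_geometric_two' a).symm
    _ ≤ ∑' n, g x n / 2 / 2 ^ n := by
        apply Summable.tsum_le_tsum _ (summable_geometric_two' a) (hsum _ (hga x) (hgb x))
        intro n
        have p2 : (0:ℝ) < 2 ^ n := by positivity
        gcongr
        exact hga x n
  have hUb : ∀ x, U x ≤ b := by
    intro x
    calc U x ≤ ∑' n : ℕ, b / 2 / 2 ^ n := by
          apply Summable.tsum_le_tsum _ (hsum _ (hga x) (hgb x)) (summable_geometric_two' b)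
          intro n
          have p2 : (0:ℝ) < 2 ^ n := by positivity
          gcongr
          exact hgb x n
    _ = b := tsum_geometric_two' b
  have hg0 : ∀ x, g x 0 = ((c x).1 : ℝ) := fun x => rfl
  have hgsucc : ∀ x n, g x (n + 1) = g (S x) n := by
    intro x n
    simp only [hg, Function.iterate_succ_apply]
  have hUeq : ∀ x, U x = (((c x).1 : ℝ) + U (S x)) / 2 := by
    intro x
    have hsx := hsum _ (hga x) (hgb x)
    show (∑' n : ℕ, g x n / 2 / 2 ^ n) = (((c x).1 : ℝ) + ∑' n : ℕ, g (S x) n / 2 / 2 ^ n) / 2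
    rw [Summable.tsum_eq_zero_add hsx]
    have e1 : ∀ n : ℕ, g x (n + 1) / 2 / 2 ^ (n + 1) = (g (S x) n / 2 / 2 ^ n) / 2 := by
      intro n
      rw [hgsucc]
      rw [pow_succ]
      ring
    rw [tsum_congr e1, tsum_div_const]
    rw [hg0]
    ring
  refine ⟨fun x => ⟨U x, hUa x, hUb x⟩, ?_, ?_⟩
  · intro x
    apply Subtype.ext
    show U x = (((c x).1 : ℝ) + U ((c x).2)) / 2
    exact hUeq x
  · intro v hv
    funext x
    apply Subtype.ext
    have key : ∀ n : ℕ, ∀ x : X, |((v x : ℝ)) - U x| * 2 ^ n ≤ b - a := by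
      intro n
      induction n with
      | zero =>
        intro x
        have h1 := (v x).2.1; have h2 := (v x).2.2
        have h3 := hUa x; have h4 := hUb x
        simp only [pow_zero, mul_one]
        rw [abs_le]; constructor <;> simp <;> linarith
      | succ n ih =>
        intro x
        have hvx : ((v x : ℝ)) = (((c x).1 : ℝ) + (v (S x) : ℝ)) / 2 := by
          have := congrArg Subtype.val (hv x)
          exact this
        have hd : ((v x : ℝ)) - U x = (((v (S x) : ℝ)) - U (S x)) / 2 := by
          rw [hvx, hUeq x]; ring
        have habs : |((v x : ℝ)) - U x| = |((v (S x) : ℝ)) - U (S x)| / 2 := by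
          rw [hd, abs_div, abs_two]
        have h2 : |((v x : ℝ)) - U x| * 2 ^ (n+1)
            = |((v (S x) : ℝ)) - U (S x)| * 2 ^ n := by
          rw [habs, pow_succ]; ring
        rw [h2]; exact ih (S x)
    have hlim : Filter.Tendsto (fun n : ℕ => (b - a) / 2 ^ n) Filter.atTop (nhds 0) := by
      have h1 := tendsto_pow_atTop_nhds_zero_of_lt_one
        (by norm_num : (0:ℝ) ≤ 1/2) (by norm_num : (1/2:ℝ) < 1)
      have h2 := h1.const_mul (b - a)
      simpa [div_eq_mul_inv, one_div, inv_pow, mul_comm] using h2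
    have hle0 : |((v x : ℝ)) - U x| ≤ 0 := by
      apply ge_of_tendsto hlim
      apply Filter.Eventually.of_forall
      intro n
      rw [le_div_iff₀ (by positivity : (0:ℝ) < 2 ^ n)]
      exact key n x
    have heq0 : ((v x : ℝ)) - U x = 0 :=
      abs_eq_zero.mp (le_antisymm hle0 (abs_nonneg _))
    show (v x : ℝ) = U x
    linarith

/-- The doubling map on `[a,b]`. -/
noncomputable def Ticc (a b : ℝ) (t : Set.Icc a b) : Set.Icc a b :=
  if h : t.1 ≤ (a + b) / 2 then
    ⟨2 * t.1 - a, by obtain ⟨h1, h2⟩ := t.2; constructor <;> linarith⟩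
  else
    ⟨2 * t.1 - b, by obtain ⟨h1, h2⟩ := t.2; push_neg at h; constructor <;> linarith⟩

theorem icc_universal (a b : ℝ) (hab : a < b)
    (A : Type) (m : A → A → A) (hm : IsMidpoint m) (hit : Iterative m)
    (x y : A) : ∃! h : Set.Icc a b → A,
      (∀ u v, h (iccMid a b u v) = m (h u) (h v)) ∧
      h ⟨a, Set.left_mem_Icc.mpr hab.le⟩ = x ∧
      h ⟨b, Set.right_mem_Icc.mpr hab.le⟩ = y := by
  obtain ⟨hid, hcomm, htr⟩ := hm
  -- the three special points
  set apt : Set.Icc a b := ⟨a, Set.left_mem_Icc.mpr hab.le⟩ with hapt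
  set bpt : Set.Icc a b := ⟨b, Set.right_mem_Icc.mpr hab.le⟩ with hbpt
  set cpt : Set.Icc a b := ⟨(a + b) / 2, by constructor <;> [linarith; linarith]⟩ with hcpt
  -- the digit map
  set D : Set.Icc a b → A := fun t => if t.1 ≤ (a + b) / 2 then x else y with hD
  -- the unique iterative solution on [a,b]
  obtain ⟨u, hu, huniq⟩ := hit (Set.Icc a b) (fun t => (D t, Ticc a b t))
  simp only at hu
  -- `z = m w z → z = w`
  have unit : ∀ w z : A, z = m w z → z = w := by
    intro w z hz
    obtain ⟨U, hU, hUu⟩ := hit PUnit (fun _ => (w, PUnit.unit))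
    have h1 : (fun _ : PUnit => z) = U := hUu _ (fun _ => hz)
    have h2 : (fun _ : PUnit => w) = U := hUu _ (fun _ => (hid w).symm)
    exact congrFun (h1.trans h2.symm) PUnit.unit
  -- approximation lemma
  have approx : ∀ (cs p q : ℕ → A),
      (∀ n, p n = m (cs n) (p (n + 1))) → (∀ n, q n = m (cs n) (q (n + 1))) →
      p 0 = q 0 := by
    intro cs p q hp hq
    obtain ⟨U, hU, hUu⟩ := hit ℕ (fun n => (cs n, n + 1))
    have h1 : p = U := hUu _ hp
    have h2 : q = U := hUu _ hq
    rw [h1, h2]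
  have hDpos : ∀ t : Set.Icc a b, (t : ℝ) ≤ (a + b) / 2 → D t = x := by
    intro t h; simp only [hD]; rw [if_pos h]
  have hDneg : ∀ t : Set.Icc a b, ¬((t : ℝ) ≤ (a + b) / 2) → D t = y := by
    intro t h; simp only [hD]; rw [if_neg h]
  -- values of T at special points
  have hTa : Ticc a b apt = apt := by
    rw [Ticc, dif_pos (by simp only [hapt]; linarith : (apt : ℝ) ≤ (a + b) / 2)]
    apply Subtype.ext; show 2 * (apt : ℝ) - a = apt; simp only [hapt]; ring
  have hTb : Ticc a b bpt = bpt := by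
    rw [Ticc, dif_neg (by simp only [hbpt]; push_neg; linarith : ¬((bpt : ℝ) ≤ (a + b) / 2))]
    apply Subtype.ext; show 2 * (bpt : ℝ) - b = bpt; simp only [hbpt]; ring
  have hTc : Ticc a b cpt = bpt := by
    rw [Ticc, dif_pos (by simp only [hcpt]; linarith : (cpt : ℝ) ≤ (a + b) / 2)]
    apply Subtype.ext; show 2 * (cpt : ℝ) - a = bpt; simp only [hcpt, hbpt]; ring
  -- values of u at special points
  have hua : u apt = x := by
    apply unit
    have := hu apt
    rwa [hTa, hDpos apt (by simp only [hapt]; linarith)] at this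
  have hub : u bpt = y := by
    apply unit
    have := hu bpt
    rwa [hTb, hDneg bpt (by simp only [hbpt]; push_neg; linarith)] at this
  have huc : u cpt = m x y := by
    have := hu cpt
    rwa [hTc, hDpos cpt (by simp only [hcpt]; linarith), hub] at this
  have mval : ∀ s t : Set.Icc a b, ((iccMid a b s t : ℝ)) = ((s : ℝ) + t) / 2 :=
    fun s t => rfl
  -- homomorphism property when the left argument is `a`
  have Da : ∀ t : Set.Icc a b, u (iccMid a b apt t) = m x (u t) := by
    intro t
    have h1 : ((iccMid a b apt t : ℝ)) ≤ (a + b) / 2 := by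
      rw [mval]; have := t.2.2; simp only [hapt]; linarith
    have h2 : Ticc a b (iccMid a b apt t) = t := by
      rw [Ticc, dif_pos h1]; apply Subtype.ext
      show 2 * ((iccMid a b apt t : ℝ)) - a = t
      rw [mval]; simp only [hapt]; ring
    have := hu (iccMid a b apt t)
    rwa [hDpos _ h1, h2] at this
  -- homomorphism property when the left argument is `b`
  have Db : ∀ t : Set.Icc a b, u (iccMid a b bpt t) = m y (u t) := by
    intro t
    rcases eq_or_lt_of_le t.2.1 with heq | hlt
    · have ht : t = apt := by apply Subtype.ext; exact heq.symm
      have hmid : iccMid a b bpt t = cpt := by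
        apply Subtype.ext; rw [mval]; simp only [ht, hapt, hbpt, hcpt]; ring
      rw [hmid, huc, ht, hua, hcomm]
    · have h1 : ¬((iccMid a b bpt t : ℝ)) ≤ (a + b) / 2 := by
        rw [mval]; push_neg; simp only [hbpt]; linarith
      have h2 : Ticc a b (iccMid a b bpt t) = t := by
        rw [Ticc, dif_neg h1]; apply Subtype.ext
        show 2 * ((iccMid a b bpt t : ℝ)) - b = t
        rw [mval]; simp only [hbpt]; ring
      have := hu (iccMid a b bpt t)
      rwa [hDneg _ h1, h2] at this
  -- homomorphism property when the left argument is the center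
  have Dc : ∀ t : Set.Icc a b, u (iccMid a b cpt t) = m (m x y) (u t) := by
    intro t
    by_cases hc : (t : ℝ) ≤ (a + b) / 2
    · set q : Set.Icc a b := ⟨2 * t.1 - a, by
        obtain ⟨k1, k2⟩ := t.2; constructor <;> linarith⟩ with hq
      have hTt : Ticc a b t = q := by rw [Ticc, dif_pos hc]
      have h1 : ((iccMid a b cpt t : ℝ)) ≤ (a + b) / 2 := by
        rw [mval]; simp only [hcpt]; linarith
      have h2 : Ticc a b (iccMid a b cpt t) = iccMid a b bpt q := by
        rw [Ticc, dif_pos h1]; apply Subtype.ext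
        show 2 * ((iccMid a b cpt t : ℝ)) - a = ((iccMid a b bpt q : ℝ))
        rw [mval, mval]; simp only [hcpt, hbpt, hq]; ring
      have lhs : u (iccMid a b cpt t) = m x (m y (u q)) := by
        have := hu (iccMid a b cpt t)
        rw [hDpos _ h1, h2, Db] at this; exact this
      have rhs : u t = m x (u q) := by
        have := hu t
        rwa [hDpos _ hc, hTt] at this
      rw [lhs, rhs, htr, hid]
    · set q : Set.Icc a b := ⟨2 * t.1 - b, by
        obtain ⟨k1, k2⟩ := t.2; push_neg at hc; constructor <;> linarith⟩ with hq
      have hTt : Ticc a b t = q := by rw [Ticc, dif_neg hc]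
      have h1 : ¬((iccMid a b cpt t : ℝ)) ≤ (a + b) / 2 := by
        rw [mval]; push_neg at hc ⊢; simp only [hcpt]; linarith
      have h2 : Ticc a b (iccMid a b cpt t) = iccMid a b apt q := by
        rw [Ticc, dif_neg h1]; apply Subtype.ext
        show 2 * ((iccMid a b cpt t : ℝ)) - b = ((iccMid a b apt q : ℝ))
        rw [mval, mval]; simp only [hcpt, hapt, hq]; ring
      have lhs : u (iccMid a b cpt t) = m y (m x (u q)) := by
        have := hu (iccMid a b cpt t)
        rw [hDneg _ h1, h2, Da] at this; exact this
      have rhs : u t = m y (u q) := by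
        have := hu t
        rwa [hDneg _ hc, hTt] at this
      rw [lhs, rhs]
      calc m y (m x (u q)) = m (m y y) (m x (u q)) := by rw [hid]
      _ = m (m y x) (m y (u q)) := htr y y x (u q)
      _ = m (m x y) (m y (u q)) := by rw [hcomm y x]
  -- one step of the coupled doubling
  have step : ∀ s t : Set.Icc a b,
      u (iccMid a b s t) = m (m (D s) (D t)) (u (iccMid a b (Ticc a b s) (Ticc a b t))) := by
    intro s t
    by_cases hs : (s : ℝ) ≤ (a + b) / 2 <;> by_cases ht : (t : ℝ) ≤ (a + b) / 2
    · have hTs : ((Ticc a b s : ℝ)) = 2 * s.1 - a := by rw [Ticc, dif_pos hs]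
      have hTt : ((Ticc a b t : ℝ)) = 2 * t.1 - a := by rw [Ticc, dif_pos ht]
      have hmid : iccMid a b s t = iccMid a b apt (iccMid a b (Ticc a b s) (Ticc a b t)) := by
        apply Subtype.ext; rw [mval, mval, mval, hTs, hTt]; simp only [hapt]; ring
      rw [hmid, Da, hDpos _ hs, hDpos _ ht, hid]
    · have hTs : ((Ticc a b s : ℝ)) = 2 * s.1 - a := by rw [Ticc, dif_pos hs]
      have hTt : ((Ticc a b t : ℝ)) = 2 * t.1 - b := by rw [Ticc, dif_neg ht]
      have hmid : iccMid a b s t = iccMid a b cpt (iccMid a b (Ticc a b s) (Ticc a b t)) := by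
        apply Subtype.ext; rw [mval, mval, mval, hTs, hTt]; simp only [hcpt]; ring
      rw [hmid, Dc, hDpos _ hs, hDneg _ ht]
    · have hTs : ((Ticc a b s : ℝ)) = 2 * s.1 - b := by rw [Ticc, dif_neg hs]
      have hTt : ((Ticc a b t : ℝ)) = 2 * t.1 - a := by rw [Ticc, dif_pos ht]
      have hmid : iccMid a b s t = iccMid a b cpt (iccMid a b (Ticc a b s) (Ticc a b t)) := by
        apply Subtype.ext; rw [mval, mval, mval, hTs, hTt]; simp only [hcpt]; ring
      rw [hmid, Dc, hDneg _ hs, hDpos _ ht, hcomm y x]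
    · have hTs : ((Ticc a b s : ℝ)) = 2 * s.1 - b := by rw [Ticc, dif_neg hs]
      have hTt : ((Ticc a b t : ℝ)) = 2 * t.1 - b := by rw [Ticc, dif_neg ht]
      have hmid : iccMid a b s t = iccMid a b bpt (iccMid a b (Ticc a b s) (Ticc a b t)) := by
        apply Subtype.ext; rw [mval, mval, mval, hTs, hTt]; simp only [hbpt]; ring
      rw [hmid, Db, hDneg _ hs, hDneg _ ht, hid]
  -- the full homomorphism property
  have hom : ∀ s t : Set.Icc a b, u (iccMid a b s t) = m (u s) (u t) := by
    intro s t
    set si : ℕ → Set.Icc a b := fun n => (Ticc a b)^[n] s with hsi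
    set ti : ℕ → Set.Icc a b := fun n => (Ticc a b)^[n] t with hti
    have hsisucc : ∀ n, si (n + 1) = Ticc a b (si n) := by
      intro n; simp only [hsi, Function.iterate_succ_apply']
    have htisucc : ∀ n, ti (n + 1) = Ticc a b (ti n) := by
      intro n; simp only [hti, Function.iterate_succ_apply']
    have key := approx (fun n => m (D (si n)) (D (ti n)))
      (fun n => u (iccMid a b (si n) (ti n)))
      (fun n => m (u (si n)) (u (ti n)))
      (by intro n
          rw [hsisucc, htisucc]
          exact step (si n) (ti n))
      (by intro n
          rw [hsisucc, htisucc]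
          rw [hu (si n), hu (ti n)]
          exact htr (D (si n)) (u (Ticc a b (si n))) (D (ti n)) (u (Ticc a b (ti n))))
    simpa only [hsi, hti, Function.iterate_zero_apply] using key
  -- conclusion
  refine ⟨u, ⟨hom, hua, hub⟩, ?_⟩
  rintro h' ⟨hh, ha, hb⟩
  apply huniq
  intro t
  show h' t = m (D t) (h' (Ticc a b t))
  by_cases ht : (t : ℝ) ≤ (a + b) / 2
  · have hmid : t = iccMid a b apt (Ticc a b t) := by
      apply Subtype.ext
      have hTt : ((Ticc a b t : ℝ)) = 2 * t.1 - a := by rw [Ticc, dif_pos ht]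
      rw [mval, hTt]; simp only [hapt]; ring
    rw [hDpos _ ht]
    calc h' t = h' (iccMid a b apt (Ticc a b t)) := by rw [← hmid]
    _ = m (h' apt) (h' (Ticc a b t)) := hh _ _
    _ = m x (h' (Ticc a b t)) := by rw [hapt] at ha ⊢; rw [ha]
  · have hmid : t = iccMid a b bpt (Ticc a b t) := by
      apply Subtype.ext
      have hTt : ((Ticc a b t : ℝ)) = 2 * t.1 - b := by rw [Ticc, dif_neg ht]
      rw [mval, hTt]; simp only [hbpt]; ring
    rw [hDneg _ ht]
    calc h' t = h' (iccMid a b bpt (Ticc a b t)) := by rw [← hmid]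
    _ = m (h' bpt) (h' (Ticc a b t)) := hh _ _
    _ = m y (h' (Ticc a b t)) := by rw [hbpt] at hb ⊢; rw [hb]

/-- `([a,b], ⊕, a, b)` is an interval object in the category of sets. -/
theorem interval_object_in_Set (a b : ℝ) (hab : a < b) :
    IsMidpoint (iccMid a b) ∧ Cancellative (iccMid a b) ∧ Iterative (iccMid a b) ∧
    ∀ (A : Type) (m : A → A → A), IsMidpoint m → Cancellative m → Iterative m →
      ∀ x y : A, ∃! h : Set.Icc a b → A,
        (∀ u v, h (iccMid a b u v) = m (h u) (h v)) ∧
        h ⟨a, Set.left_mem_Icc.mpr hab.le⟩ = x ∧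
        h ⟨b, Set.right_mem_Icc.mpr hab.le⟩ = y := by
  refine ⟨⟨?_, ?_, ?_⟩, ?_, icc_iterative a b hab.le, ?_⟩
  · intro t; apply Subtype.ext; show ((t : ℝ) + t) / 2 = t; ring
  · intro s t; apply Subtype.ext; show ((s : ℝ) + t) / 2 = ((t : ℝ) + s) / 2; ring
  · intro s t p q; apply Subtype.ext
    show (((s : ℝ) + t) / 2 + ((p : ℝ) + q) / 2) / 2
      = (((s : ℝ) + p) / 2 + ((t : ℝ) + q) / 2) / 2
    ring
  · intro s t p h
    apply Subtype.ext
    have := congrArg Subtype.val h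
    have h2 : ((s : ℝ) + t) / 2 = ((s : ℝ) + p) / 2 := this
    linarith
  · intro A m hm _hc hit x y
    exact icc_universal a b hab A m hm hit x y
end

section
/- For every set X, the set FX = { w : X → [0,1] | w has countable support and Σ_{x∈X} w(x) = 1 }, equipped with the pointwise superconvex combinations (Σ'ᵢ λᵢ·wᵢ)(x) = Σᵢ λᵢ · wᵢ(x), is the free superconvex set over X with insertion of generators η(x) = (y ↦ δ_{xy}): for every superconvex set Y and every function f : X → Y there is a unique superaffine map h : FX → Y with f = h ∘ η. Moreover, FX is cancellative (and hence iterative). -/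
/-- A superconvex weight: a nonnegative sequence summing to 1. -/
def IsWeight (lam : ℕ → ℝ) : Prop := (∀ i, 0 ≤ lam i) ∧ ∑' i, lam i = 1

/-- A superconvex structure on `X`: an operation of countable convex combination,
satisfying the projection and composition laws (on genuine weights). -/
structure SuperconvexStr (X : Type) where
  comb : (ℕ → ℝ) → (ℕ → X) → X
  proj : ∀ lam, IsWeight lam → ∀ k, lam k = 1 → (∀ i, i ≠ k → lam i = 0) →
    ∀ x, comb lam x = x k
  compos : ∀ lam, IsWeight lam → ∀ mu : ℕ → ℕ → ℝ, (∀ i, IsWeight (mu i)) →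
    ∀ x : ℕ → X, comb lam (fun i => comb (mu i) x) = comb (fun j => ∑' i, lam i * mu i j) x

/-- The binary combination `λ·x + (1-λ)·y`. -/
def SuperconvexStr.pair {X : Type} (S : SuperconvexStr X) (lam : ℝ) (x y : X) : X :=
  S.comb (fun i => if i = 0 then lam else if i = 1 then 1 - lam else 0)
    (fun i => if i = 0 then x else y)

/-- Cancellativity of a superconvex structure. -/
def SuperconvexStr.Cancellative {X : Type} (S : SuperconvexStr X) : Prop :=
  ∀ lam : ℝ, 0 < lam → lam < 1 → ∀ x y z : X, S.pair lam x z = S.pair lam y z → x = y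

/-- Iterativity of a superconvex structure. -/
def SuperconvexStr.Iterative {X : Type} (S : SuperconvexStr X) : Prop :=
  ∀ (x y : ℕ → X) (lam mu : ℕ → ℝ),
    (∀ i, 0 < lam i ∧ lam i < 1) → (∀ i, 0 < mu i ∧ mu i < 1) →
    (∀ i, lam i + mu i = 1) →
    (∀ i, x i = S.pair (lam i) (y i) (x (i + 1))) →
    Filter.Tendsto (fun n => ∏ j ∈ Finset.range n, mu j) Filter.atTop (nhds 0) →
    x 0 = S.comb (fun i => lam i * ∏ j ∈ Finset.range i, mu j) y

/-- The underlying set of the free superconvex set over `X`: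
functions `X → [0,1]` with countable support and total sum 1. -/
def FreeSC (X : Type) : Set (X → ℝ) :=
  {w | (∀ x, 0 ≤ w x ∧ w x ≤ 1) ∧ (Function.support w).Countable ∧ ∑' x, w x = 1}

open Classical in
/-- The insertion of generators `η(x) = (y ↦ δ_{xy})`. -/
noncomputable def etaFree {X : Type} (x : X) : FreeSC X :=
  ⟨fun y => if y = x then 1 else 0, by
    refine ⟨fun y => ?_, ?_, ?_⟩
    · by_cases h : y = x <;> simp [h]
    · exact (Set.countable_singleton x).mono
        (Function.support_subset_iff.mpr fun y hy => by
          by_contra h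
          exact hy (if_neg h))
    · have : (∑' y : X, if y = x then (1 : ℝ) else 0) = if x = x then (1 : ℝ) else 0 :=
        tsum_eq_single x fun y hy => if_neg hy
      rw [if_pos rfl] at this
      exact this⟩

/-- Superaffine maps between superconvex sets. -/
def IsSuperaffine {X Y : Type} (S : SuperconvexStr X) (T : SuperconvexStr Y)
    (f : X → Y) : Prop :=
  ∀ lam, IsWeight lam → ∀ x : ℕ → X, f (S.comb lam x) = T.comb lam (fun i => f (x i))

namespace FreeSCAux
open Function

lemma tsum_eq_toReal' {α : Type*} {f : α → ℝ} (h0 : ∀ a, 0 ≤ f a) :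
    ∑' a, f a = (∑' a, ENNReal.ofReal (f a)).toReal := by
  rw [ENNReal.tsum_toReal_eq fun a => ENNReal.ofReal_ne_top]
  exact tsum_congr fun a => (ENNReal.toReal_ofReal (h0 a)).symm

lemma esum_eq_one' {α : Type*} {f : α → ℝ} (h0 : ∀ a, 0 ≤ f a) (h : ∑' a, f a = 1) :
    ∑' a, ENNReal.ofReal (f a) = 1 := by
  by_cases hT : ∑' a, ENNReal.ofReal (f a) = ⊤
  · rw [tsum_eq_toReal' h0, hT] at h; simp at h
  · rw [tsum_eq_toReal' h0] at h
    rw [← ENNReal.ofReal_toReal hT, h]; simp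

lemma real_sum_eq_one' {α : Type*} {f : α → ℝ} (h0 : ∀ a, 0 ≤ f a)
    (h : ∑' a, ENNReal.ofReal (f a) = 1) : ∑' a, f a = 1 := by
  rw [tsum_eq_toReal' h0, h]; simp

lemma ofReal_tsum'' {α : Type*} {f : α → ℝ} (h0 : ∀ a, 0 ≤ f a)
    (h : ∑' a, ENNReal.ofReal (f a) ≠ ⊤) :
    ENNReal.ofReal (∑' a, f a) = ∑' a, ENNReal.ofReal (f a) := by
  rw [tsum_eq_toReal' h0, ENNReal.ofReal_toReal h]

/-- The pointwise convex combination. -/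
noncomputable def combFun {X : Type} (lam : ℕ → ℝ) (w : ℕ → FreeSC X) : X → ℝ :=
  fun x => ∑' i, lam i * (w i).1 x

section Comb
variable {X : Type} {lam : ℕ → ℝ}

lemma esum_w_eq_one (w : ℕ → FreeSC X) (i : ℕ) : ∑' x, ENNReal.ofReal ((w i).1 x) = 1 :=
  esum_eq_one' (fun x => ((w i).2.1 x).1) (w i).2.2.2

lemma esum_lam_eq_one (hlam : IsWeight lam) : ∑' i, ENNReal.ofReal (lam i) = 1 := esum_eq_one' hlam.1 hlam.2

lemma esum_bound (hlam : IsWeight lam) (g : ℕ → ENNReal) (hg : ∀ i, g i ≤ 1) :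
    ∑' i, ENNReal.ofReal (lam i) * g i ≤ 1 := by
  calc ∑' i, ENNReal.ofReal (lam i) * g i
      ≤ ∑' i, ENNReal.ofReal (lam i) * 1 :=
        ENNReal.tsum_le_tsum fun i => mul_le_mul_right (hg i) _
    _ = 1 := by simpa using esum_lam_eq_one hlam

lemma ofReal_combFun (hlam : IsWeight lam) (w : ℕ → FreeSC X) (x : X) :
    ENNReal.ofReal (combFun lam w x) =
      ∑' i, ENNReal.ofReal (lam i) * ENNReal.ofReal ((w i).1 x) := by
  have hb : ∑' i, ENNReal.ofReal (lam i * (w i).1 x) ≠ ⊤ := by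
    have : ∑' i, ENNReal.ofReal (lam i * (w i).1 x)
        = ∑' i, ENNReal.ofReal (lam i) * ENNReal.ofReal ((w i).1 x) :=
      tsum_congr fun i => ENNReal.ofReal_mul (hlam.1 i)
    rw [this]
    exact ((esum_bound hlam _ fun i => ENNReal.ofReal_le_one.2 ((w i).2.1 x).2).trans_lt
      ENNReal.one_lt_top).ne
  rw [combFun, ofReal_tsum'' (fun i => mul_nonneg (hlam.1 i) ((w i).2.1 x).1) hb]
  exact tsum_congr fun i => ENNReal.ofReal_mul (hlam.1 i)

lemma combFun_nonneg (hlam : IsWeight lam) (w : ℕ → FreeSC X) (x : X) : 0 ≤ combFun lam w x :=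
  tsum_nonneg fun i => mul_nonneg (hlam.1 i) ((w i).2.1 x).1

lemma combFun_mem (hlam : IsWeight lam) (w : ℕ → FreeSC X) : combFun lam w ∈ FreeSC X := by
  refine ⟨fun x => ⟨combFun_nonneg hlam w x, ?_⟩, ?_, ?_⟩
  · -- ≤ 1
    have := esum_bound hlam (fun i => ENNReal.ofReal ((w i).1 x))
      (fun i => ENNReal.ofReal_le_one.2 ((w i).2.1 x).2)
    have h2 : ENNReal.ofReal (combFun lam w x) ≤ 1 := by
      rw [ofReal_combFun hlam w x]; exact this
    have := ENNReal.toReal_mono (by simp) h2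
    rwa [ENNReal.toReal_ofReal (combFun_nonneg hlam w x), ENNReal.toReal_one] at this
  · -- countable support
    refine (Set.countable_iUnion (fun i => (w i).2.2.1)).mono ?_
    intro x hx
    simp only [Set.mem_iUnion]
    by_contra hall
    push_neg at hall
    apply hx
    have : ∀ i, lam i * (w i).1 x = 0 := by
      intro i
      have : (w i).1 x = 0 := by
        by_contra h; exact hall i h
      rw [this, mul_zero]
    simp only [Function.mem_support, not_not] at *
    rw [combFun]
    exact (tsum_congr this).trans tsum_zero
  · -- total mass 1
    refine real_sum_eq_one' (combFun_nonneg hlam w) ?_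
    have : ∀ x, ENNReal.ofReal (combFun lam w x)
        = ∑' i, ENNReal.ofReal (lam i) * ENNReal.ofReal ((w i).1 x) :=
      ofReal_combFun hlam w
    rw [tsum_congr this, ENNReal.tsum_comm]
    calc ∑' i, ∑' x, ENNReal.ofReal (lam i) * ENNReal.ofReal ((w i).1 x)
        = ∑' i, ENNReal.ofReal (lam i) * ∑' x, ENNReal.ofReal ((w i).1 x) := by
          exact tsum_congr fun i => ENNReal.tsum_mul_left
      _ = ∑' i, ENNReal.ofReal (lam i) * 1 := by
          exact tsum_congr fun i => by rw [esum_w_eq_one]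
      _ = 1 := by simpa using esum_lam_eq_one hlam

end Comb
end FreeSCAux
namespace FreeSCAux
open Function

open Classical in
noncomputable def scComb {X : Type} (lam : ℕ → ℝ) (w : ℕ → FreeSC X) : FreeSC X :=
  if h : IsWeight lam then ⟨combFun lam w, combFun_mem h w⟩ else w 0

lemma scComb_pos {X : Type} {lam : ℕ → ℝ} (hlam : IsWeight lam) (w : ℕ → FreeSC X) :
    scComb lam w = ⟨combFun lam w, combFun_mem hlam w⟩ := dif_pos hlam

lemma scComb_apply {X : Type} {lam : ℕ → ℝ} (hlam : IsWeight lam) (w : ℕ → FreeSC X) (t : X) :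
    (scComb lam w).1 t = combFun lam w t := by rw [scComb_pos hlam]

/-- The free superconvex structure. -/
noncomputable def SC (X : Type) : SuperconvexStr (FreeSC X) where
  comb := scComb
  proj := by
    intro lam hlam k hk h0 w
    rw [scComb_pos hlam]
    refine Subtype.ext (funext fun t => ?_)
    show combFun lam w t = (w k).1 t
    rw [combFun, tsum_eq_single k (fun i hi => by rw [h0 i hi, zero_mul]), hk, one_mul]
  compos := by
    intro lam hlam mu hmu w
    have hν : IsWeight fun j => ∑' i, lam i * mu i j := by
      constructor
      · exact fun j => tsum_nonneg fun i => mul_nonneg (hlam.1 i) ((hmu i).1 j)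
      · refine real_sum_eq_one'
          (fun j => tsum_nonneg fun i => mul_nonneg (hlam.1 i) ((hmu i).1 j)) ?_
        have key : ∀ j, ENNReal.ofReal (∑' i, lam i * mu i j)
            = ∑' i, ENNReal.ofReal (lam i) * ENNReal.ofReal (mu i j) := by
          intro j
          have hmul : ∀ i, ENNReal.ofReal (lam i * mu i j)
              = ENNReal.ofReal (lam i) * ENNReal.ofReal (mu i j) :=
            fun i => ENNReal.ofReal_mul (hlam.1 i)
          have hb : ∑' i, ENNReal.ofReal (lam i * mu i j) ≠ ⊤ := by
            rw [tsum_congr hmul]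
            refine ((esum_bound hlam _ fun i => ?_).trans_lt ENNReal.one_lt_top).ne
            rw [← (esum_eq_one' (hmu i).1 (hmu i).2 : ∑' j, ENNReal.ofReal (mu i j) = 1)]
            exact ENNReal.le_tsum j
          rw [ofReal_tsum'' (fun i => mul_nonneg (hlam.1 i) ((hmu i).1 j)) hb,
            tsum_congr hmul]
        rw [tsum_congr key, ENNReal.tsum_comm]
        calc ∑' i, ∑' j, ENNReal.ofReal (lam i) * ENNReal.ofReal (mu i j)
            = ∑' i, ENNReal.ofReal (lam i) * ∑' j, ENNReal.ofReal (mu i j) :=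
              tsum_congr fun i => ENNReal.tsum_mul_left
          _ = ∑' i, ENNReal.ofReal (lam i) * 1 :=
              tsum_congr fun i => by rw [esum_eq_one' (hmu i).1 (hmu i).2]
          _ = 1 := by simpa using esum_lam_eq_one hlam
    rw [scComb_pos hlam, scComb_pos hν]
    refine Subtype.ext (funext fun t => ?_)
    show combFun lam (fun i => scComb (mu i) w) t = combFun _ w t
    have hinner : ∀ i, scComb (mu i) w
          = (⟨combFun (mu i) w, combFun_mem (hmu i) w⟩ : FreeSC X) := fun i => scComb_pos (hmu i) w
    -- ENNReal versions
    have lhs : ENNReal.ofReal (combFun lam (fun i => scComb (mu i) w) t)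
        = ∑' i, ENNReal.ofReal (lam i) *
            ∑' j, ENNReal.ofReal (mu i j) * ENNReal.ofReal ((w j).1 t) := by
      rw [ofReal_combFun hlam]
      refine tsum_congr fun i => ?_
      rw [hinner i]
      show ENNReal.ofReal (lam i) * ENNReal.ofReal (combFun (mu i) w t) = _
      rw [ofReal_combFun (hmu i)]
    have rhs : ENNReal.ofReal (combFun (fun j => ∑' i, lam i * mu i j) w t)
        = ∑' j, (∑' i, ENNReal.ofReal (lam i) * ENNReal.ofReal (mu i j)) *
            ENNReal.ofReal ((w j).1 t) := by
      rw [ofReal_combFun hν]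
      refine tsum_congr fun j => ?_
      congr 1
      have hmul : ∀ i, ENNReal.ofReal (lam i * mu i j)
          = ENNReal.ofReal (lam i) * ENNReal.ofReal (mu i j) :=
        fun i => ENNReal.ofReal_mul (hlam.1 i)
      have hb : ∑' i, ENNReal.ofReal (lam i * mu i j) ≠ ⊤ := by
        rw [tsum_congr hmul]
        refine ((esum_bound hlam _ fun i => ?_).trans_lt ENNReal.one_lt_top).ne
        rw [← (esum_eq_one' (hmu i).1 (hmu i).2 : ∑' j, ENNReal.ofReal (mu i j) = 1)]
        exact ENNReal.le_tsum j
      rw [ofReal_tsum'' (fun i => mul_nonneg (hlam.1 i) ((hmu i).1 j)) hb, tsum_congr hmul]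
    have hEq : (∑' i, ENNReal.ofReal (lam i) *
            ∑' j, ENNReal.ofReal (mu i j) * ENNReal.ofReal ((w j).1 t))
        = ∑' j, (∑' i, ENNReal.ofReal (lam i) * ENNReal.ofReal (mu i j)) *
            ENNReal.ofReal ((w j).1 t) := by
      calc ∑' i, ENNReal.ofReal (lam i) *
              ∑' j, ENNReal.ofReal (mu i j) * ENNReal.ofReal ((w j).1 t)
          = ∑' i, ∑' j, ENNReal.ofReal (lam i) *
              (ENNReal.ofReal (mu i j) * ENNReal.ofReal ((w j).1 t)) :=
            tsum_congr fun i => ENNReal.tsum_mul_left.symm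
        _ = ∑' j, ∑' i, ENNReal.ofReal (lam i) *
              (ENNReal.ofReal (mu i j) * ENNReal.ofReal ((w j).1 t)) := ENNReal.tsum_comm
        _ = ∑' j, (∑' i, ENNReal.ofReal (lam i) * ENNReal.ofReal (mu i j)) *
              ENNReal.ofReal ((w j).1 t) := by
            refine tsum_congr fun j => ?_
            simp only [← mul_assoc]
            rw [ENNReal.tsum_mul_right]
    have := lhs.trans (hEq.trans rhs.symm)
    exact (ENNReal.ofReal_eq_ofReal_iff (combFun_nonneg hlam _ t)
      (combFun_nonneg hν w t)).1 this
end FreeSCAux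
namespace FreeSCAux
open Function

lemma pairWeight_isWeight {l : ℝ} (h0 : 0 ≤ l) (h1 : l ≤ 1) :
    IsWeight (fun i => if i = 0 then l else if i = 1 then 1 - l else 0) := by
  constructor
  · intro i
    by_cases hi : i = 0
    · simpa [hi]
    · by_cases hi1 : i = 1 <;> simp [hi, hi1, sub_nonneg, h1]
  · rw [tsum_eq_sum (s := {0, 1}) (f := fun i => if i = 0 then l else if i = 1 then 1 - l else 0)
      (fun b hb => by
        simp only [Finset.mem_insert, Finset.mem_singleton, not_or] at hb
        simp [hb.1, hb.2])]
    rw [Finset.sum_pair (by norm_num : (0 : ℕ) ≠ 1)]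
    norm_num

lemma pair_apply {X : Type} {l : ℝ} (h0 : 0 ≤ l) (h1 : l ≤ 1) (a b : FreeSC X) (t : X) :
    ((SC X).pair l a b).1 t = l * a.1 t + (1 - l) * b.1 t := by
  have hw := pairWeight_isWeight h0 h1
  show (scComb _ _).1 t = _
  rw [scComb_apply hw, combFun]
  rw [tsum_eq_sum (s := {0, 1}) (fun b hb => by
      simp only [Finset.mem_insert, Finset.mem_singleton, not_or] at hb
      simp [hb.1, hb.2])]
  rw [Finset.sum_pair (by norm_num : (0 : ℕ) ≠ 1)]
  norm_num

lemma SC_cancellative (X : Type) : (SC X).Cancellative := by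
  intro l hl0 hl1 x y z heq
  refine Subtype.ext (funext fun t => ?_)
  have := congrArg (fun v : FreeSC X => v.1 t) heq
  simp only [pair_apply hl0.le hl1.le] at this
  have h2 : l * x.1 t = l * y.1 t := by linarith
  exact mul_left_cancel₀ (ne_of_gt hl0) h2

lemma SC_iterative (X : Type) : (SC X).Iterative := by
  intro x y lam mu hlam hmu hsum hrec htend
  set P : ℕ → ℝ := fun n => ∏ j ∈ Finset.range n, mu j with hP
  set c : ℕ → ℝ := fun i => lam i * P i with hc
  have hPnonneg : ∀ n, 0 ≤ P n := fun n => Finset.prod_nonneg fun j _ => (hmu j).1.le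
  have hcnonneg : ∀ i, 0 ≤ c i := fun i => mul_nonneg (hlam i).1.le (hPnonneg i)
  have hpart : ∀ n, ∑ i ∈ Finset.range n, c i = 1 - P n := by
    intro n
    induction n with
    | zero => simp [hP]
    | succ n ih =>
        rw [Finset.sum_range_succ, ih]
        have h2 : P (n + 1) = P n * mu n := Finset.prod_range_succ _ _
        have h3 : lam n = 1 - mu n := by linarith [hsum n]
        show 1 - P n + lam n * P n = 1 - P (n + 1)
        rw [h2, h3]; ring
  have hcw : IsWeight c := by
    refine ⟨hcnonneg, ?_⟩
    have : HasSum c 1 := by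
      rw [hasSum_iff_tendsto_nat_of_nonneg hcnonneg]
      have : (fun n => ∑ i ∈ Finset.range n, c i) = fun n => 1 - P n := funext hpart
      rw [this]
      simpa using tendsto_const_nhds.sub htend
    exact this.tsum_eq
  -- pointwise recursion
  have hptw : ∀ i t, (x i).1 t = lam i * (y i).1 t + mu i * (x (i + 1)).1 t := by
    intro i t
    have := congrArg (fun v : FreeSC X => v.1 t) (hrec i)
    simp only [pair_apply (hlam i).1.le (hlam i).2.le] at this
    rw [this]
    have : (1 : ℝ) - lam i = mu i := by linarith [hsum i]
    rw [this]
  refine Subtype.ext (funext fun t => ?_)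
  rw [show (SC X).comb c y = scComb c y from rfl, scComb_apply hcw, combFun]
  have hpartial : ∀ n, ∑ i ∈ Finset.range n, c i * (y i).1 t
      = (x 0).1 t - P n * (x n).1 t := by
    intro n
    induction n with
    | zero => simp [hP]
    | succ n ih =>
        rw [Finset.sum_range_succ, ih]
        have h2 : P (n + 1) = P n * mu n := Finset.prod_range_succ _ _
        show (x 0).1 t - P n * (x n).1 t + lam n * P n * (y n).1 t
            = (x 0).1 t - P (n + 1) * (x (n + 1)).1 t
        rw [h2, hptw n t]; ring
  have hzero : Filter.Tendsto (fun n => P n * (x n).1 t) Filter.atTop (nhds 0) := by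
    refine squeeze_zero (fun n => mul_nonneg (hPnonneg n) ((x n).2.1 t).1)
      (fun n => ?_) htend
    calc P n * (x n).1 t ≤ P n * 1 := by
          exact mul_le_mul_of_nonneg_left ((x n).2.1 t).2 (hPnonneg n)
      _ = P n := mul_one _
  have hHasSum : HasSum (fun i => c i * (y i).1 t) ((x 0).1 t) := by
    rw [hasSum_iff_tendsto_nat_of_nonneg
      (fun i => mul_nonneg (hcnonneg i) ((y i).2.1 t).1)]
    have : (fun n => ∑ i ∈ Finset.range n, c i * (y i).1 t)
        = fun n => (x 0).1 t - P n * (x n).1 t := funext hpartial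
    rw [this]
    simpa using tendsto_const_nhds.sub hzero
  exact hHasSum.tsum_eq.symm
end FreeSCAux
namespace FreeSCAux
open Function

open Classical in
/-- First-occurrence weights of `w` along an enumeration `e`. -/
noncomputable def lamOf {X : Type} (w : X → ℝ) (e : ℕ → X) (i : ℕ) : ℝ :=
  if ∀ j < i, e j ≠ e i then w (e i) else 0

section Focc
variable {X : Type} {w : X → ℝ} {e : ℕ → X}

lemma focc_unique {i k : ℕ} (hi : ∀ j < i, e j ≠ e i) (hk : ∀ j < k, e j ≠ e k)
    (h : e i = e k) : i = k := by
  rcases lt_trichotomy i k with hlt | heq | hgt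
  · exact absurd h (hk i hlt)
  · exact heq
  · exact absurd h.symm (hi k hgt)

lemma exists_focc {x : X} (hx : x ∈ Set.range e) :
    ∃ i, (∀ j < i, e j ≠ e i) ∧ e i = x := by
  classical
  have hex : ∃ i, e i = x := hx
  refine ⟨Nat.find hex, fun j hj hcon => ?_, Nat.find_spec hex⟩
  exact Nat.find_min hex hj (hcon.trans (Nat.find_spec hex))

open Classical in
lemma etaFree_apply {a t : X} : (etaFree a : FreeSC X).1 t = if t = a then 1 else 0 := rfl

lemma lamOf_eq_of_focc {i : ℕ} (hi : ∀ j < i, e j ≠ e i) : lamOf w e i = w (e i) :=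
  if_pos hi

lemma lamOf_eq_zero {i : ℕ} (hi : ¬ ∀ j < i, e j ≠ e i) : lamOf w e i = 0 :=
  if_neg hi

lemma lamOf_ne_zero {i : ℕ} (h : lamOf w e i ≠ 0) :
    (∀ j < i, e j ≠ e i) ∧ w (e i) ≠ 0 := by
  by_cases hf : ∀ j < i, e j ≠ e i
  · exact ⟨hf, by rwa [lamOf_eq_of_focc hf] at h⟩
  · exact absurd (lamOf_eq_zero hf) h

lemma tsum_lamOf (hw : w ∈ FreeSC X) (hcov : Function.support w ⊆ Set.range e) :
    ∑' i, lamOf w e i = 1 := by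
  rw [← hw.2.2]
  refine tsum_eq_tsum_of_ne_zero_bij
    (fun x => (exists_focc (hcov x.2)).choose) ?_ ?_ ?_
  · intro a b hab
    have ha := (exists_focc (hcov a.2)).choose_spec
    have hb := (exists_focc (hcov b.2)).choose_spec
    apply Subtype.ext
    rw [← ha.2, ← hb.2]
    exact congrArg e hab
  · intro k hk
    obtain ⟨hf, hne⟩ := lamOf_ne_zero hk
    have hmem : e k ∈ Function.support w := hne
    have hs := (exists_focc (hcov hmem)).choose_spec
    exact ⟨⟨e k, hmem⟩, focc_unique hs.1 hf hs.2⟩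
  · intro x
    have hs := (exists_focc (hcov x.2)).choose_spec
    rw [lamOf_eq_of_focc hs.1, hs.2]

lemma lamOf_isWeight (hw : w ∈ FreeSC X) (hcov : Function.support w ⊆ Set.range e) :
    IsWeight (lamOf w e) := by
  refine ⟨fun i => ?_, tsum_lamOf hw hcov⟩
  unfold lamOf
  split
  · exact (hw.1 _).1
  · exact le_refl 0

/-- `w` is the combination of Dirac deltas along any enumeration of its support. -/
lemma comb_lamOf_eta (hw : w ∈ FreeSC X) (hcov : Function.support w ⊆ Set.range e) :
    (SC X).comb (lamOf w e) (fun i => etaFree (e i)) = ⟨w, hw⟩ := by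
  refine Subtype.ext (funext fun t => ?_)
  show (scComb _ _).1 t = w t
  rw [scComb_apply (lamOf_isWeight hw hcov), combFun]
  by_cases hwt : w t = 0
  · rw [hwt]
    have hz : ∀ i, lamOf w e i * (etaFree (e i)).1 t = 0 := by
      intro i
      rw [etaFree_apply]
      by_cases ht : t = e i
      · by_cases hf : ∀ j < i, e j ≠ e i
        · rw [lamOf_eq_of_focc hf, ← ht, hwt, zero_mul]
        · rw [lamOf_eq_zero hf, zero_mul]
      · rw [if_neg ht, mul_zero]
    exact (tsum_congr hz).trans tsum_zero
  · have hmem : t ∈ Function.support w := hwt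
    obtain ⟨i₀, hf₀, he₀⟩ := exists_focc (hcov hmem)
    rw [tsum_eq_single i₀ ?_]
    · rw [etaFree_apply, if_pos he₀.symm, mul_one, lamOf_eq_of_focc hf₀, he₀]
    · intro i hi
      rw [etaFree_apply]
      by_cases ht : t = e i
      · by_cases hf : ∀ j < i, e j ≠ e i
        · exact absurd (focc_unique hf hf₀ (by rw [← ht, he₀])) hi
        · rw [lamOf_eq_zero hf, zero_mul]
      · rw [if_neg ht, mul_zero]

end Focc
end FreeSCAux
namespace FreeSCAux
open Function

lemma weight_exists_ne_zero {lam : ℕ → ℝ} (h : IsWeight lam) : ∃ i, lam i ≠ 0 := by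
  by_contra hall
  push_neg at hall
  have := h.2
  rw [tsum_congr hall, tsum_zero] at this
  norm_num at this

/-- Dirac weight at `k`. -/
def delta (k : ℕ) : ℕ → ℝ := fun j => if j = k then 1 else 0

lemma delta_isWeight (k : ℕ) : IsWeight (delta k) := by
  constructor
  · intro j; unfold delta; split <;> norm_num
  · unfold delta
    rw [tsum_eq_single k (fun j hj => if_neg hj)]
    exact if_pos rfl

lemma comb_delta {Y : Type} (T : SuperconvexStr Y) (k : ℕ) (z : ℕ → Y) :
    T.comb (delta k) z = z k :=
  T.proj _ (delta_isWeight k) k (if_pos rfl) (fun i h => if_neg h) z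

/-- Coordinates with zero weight do not matter. -/
lemma comb_congr {Y : Type} (T : SuperconvexStr Y) {lam : ℕ → ℝ} (hlam : IsWeight lam)
    {x y : ℕ → Y} (hxy : ∀ i, lam i ≠ 0 → x i = y i) : T.comb lam x = T.comb lam y := by
  classical
  obtain ⟨i₀, hi₀⟩ := weight_exists_ne_zero hlam
  set τ : ℕ → ℕ := fun i => if lam i ≠ 0 then i else i₀ with hτ
  have key : ∀ z : ℕ → Y, T.comb lam z = T.comb lam (fun i => z (τ i)) := by
    intro z
    have hcmp := T.compos lam hlam (fun i => delta (τ i)) (fun i => delta_isWeight _) z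
    have h1 : (fun i => T.comb (delta (τ i)) z) = fun i => z (τ i) :=
      funext fun i => comb_delta T _ z
    rw [h1] at hcmp
    have h2 : (fun j => ∑' i, lam i * delta (τ i) j) = lam := by
      funext j
      rw [tsum_eq_single j ?_]
      · by_cases h : lam j ≠ 0
        · have hj : τ j = j := if_pos h
          rw [hj]
          simp [delta]
        · push_neg at h
          rw [h, zero_mul]
      · intro i hi
        by_cases h : lam i ≠ 0
        · have hii : τ i = i := if_pos h
          rw [hii, delta, if_neg (fun hh => hi hh.symm), mul_zero]
        · push_neg at h
          rw [h, zero_mul]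
    rw [h2] at hcmp
    exact hcmp.symm
  rw [key x, key y]
  congr 1
  funext i
  by_cases h : lam i ≠ 0
  · have : τ i = i := if_pos h
    rw [this]; exact hxy i h
  · have : τ i = i₀ := if_neg h
    rw [this]; exact hxy i₀ hi₀

/-- The value of a generalized convex combination is independent
of the chosen enumeration of the support. -/
lemma enumIndep {X Y : Type} (T : SuperconvexStr Y) (g : X → Y) {w : X → ℝ}
    (hw : w ∈ FreeSC X) {e1 e2 : ℕ → X}
    (h1 : Function.support w ⊆ Set.range e1) (h2 : Function.support w ⊆ Set.range e2) :
    T.comb (lamOf w e1) (fun i => g (e1 i)) = T.comb (lamOf w e2) (fun i => g (e2 i)) := by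
  classical
  have W1 := lamOf_isWeight hw h1
  have W2 := lamOf_isWeight hw h2
  set σ : ℕ → ℕ := fun i =>
    if h : w (e1 i) ≠ 0 then (exists_focc (h2 h)).choose else 0 with hσ
  have hσspec : ∀ i, w (e1 i) ≠ 0 →
      (∀ j < σ i, e2 j ≠ e2 (σ i)) ∧ e2 (σ i) = e1 i := by
    intro i hi
    have : σ i = (exists_focc (h2 hi)).choose := dif_pos hi
    rw [this]
    exact (exists_focc (h2 hi)).choose_spec
  have hcmp := T.compos (lamOf w e1) W1 (fun i => delta (σ i))
    (fun i => delta_isWeight _) (fun j => g (e2 j))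
  have hL : (fun i => T.comb (delta (σ i)) fun j => g (e2 j))
      = fun i => g (e2 (σ i)) := funext fun i => comb_delta T _ _
  rw [hL] at hcmp
  have hLHS : T.comb (lamOf w e1) (fun i => g (e2 (σ i)))
      = T.comb (lamOf w e1) (fun i => g (e1 i)) := by
    refine comb_congr T W1 fun i hi => ?_
    obtain ⟨_, hne⟩ := lamOf_ne_zero hi
    rw [(hσspec i hne).2]
  have hRHS : (fun j => ∑' i, lamOf w e1 i * delta (σ i) j) = lamOf w e2 := by
    funext j
    by_cases hj : (∀ k < j, e2 k ≠ e2 j) ∧ w (e2 j) ≠ 0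
    · -- main case
      obtain ⟨i₀, hf₀, he₀⟩ := exists_focc (h1 hj.2)
      rw [tsum_eq_single i₀ ?_]
      · have hlam₀ : lamOf w e1 i₀ = w (e2 j) := by
          rw [lamOf_eq_of_focc hf₀, he₀]
        have hw₀ : w (e1 i₀) ≠ 0 := by rw [he₀]; exact hj.2
        have hs := hσspec i₀ hw₀
        have : σ i₀ = j := focc_unique hs.1 hj.1 (by rw [hs.2, he₀])
        rw [hlam₀, delta, if_pos this.symm, mul_one, lamOf_eq_of_focc hj.1]
      · intro i hi
        by_cases hz : lamOf w e1 i = 0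
        · rw [hz, zero_mul]
        · obtain ⟨hf, hne⟩ := lamOf_ne_zero hz
          have hs := hσspec i hne
          have : j ≠ σ i := by
            intro hjs
            have : e1 i = e1 i₀ := by rw [← hs.2, ← hjs, he₀]
            exact hi (focc_unique hf hf₀ this)
          rw [delta, if_neg (fun hh => this hh), mul_zero]
    · -- degenerate case: both sides are zero
      have hz2 : lamOf w e2 j = 0 := by
        by_cases hf : ∀ k < j, e2 k ≠ e2 j
        · rw [lamOf_eq_of_focc hf]
          by_contra hne
          exact hj ⟨hf, hne⟩
        · exact lamOf_eq_zero hf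
      rw [hz2]
      have hzz : ∀ i, lamOf w e1 i * delta (σ i) j = 0 := by
        intro i
        by_cases hz : lamOf w e1 i = 0
        · rw [hz, zero_mul]
        · obtain ⟨hf, hne⟩ := lamOf_ne_zero hz
          have hs := hσspec i hne
          have : j ≠ σ i := by
            intro hjs
            refine hj ⟨by rw [hjs]; exact hs.1, ?_⟩
            rw [hjs, hs.2]; exact hne
          rw [delta, if_neg (fun hh => this hh), mul_zero]
      exact (tsum_congr hzz).trans tsum_zero
  rw [hRHS] at hcmp
  rw [← hLHS, hcmp]

lemma support_nonempty {X : Type} {w : X → ℝ} (hw : w ∈ FreeSC X) :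
    (Function.support w).Nonempty := by
  by_contra h
  rw [Set.not_nonempty_iff_eq_empty, Function.support_eq_empty_iff] at h
  have := hw.2.2
  rw [h] at this
  simp at this
  -- tsum of 0 = 1 contradiction
end FreeSCAux
namespace FreeSCAux
open Function in
theorem freeSC_main (X : Type) :
    ∃ S : SuperconvexStr (FreeSC X),
      (∀ lam, IsWeight lam → ∀ w : ℕ → FreeSC X, ∀ x : X,
        (S.comb lam w).1 x = ∑' i, lam i * (w i).1 x) ∧
      S.Cancellative ∧ S.Iterative ∧
      ∀ (Y : Type) (T : SuperconvexStr Y) (f : X → Y),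
        ∃! h : FreeSC X → Y, IsSuperaffine S T h ∧ ∀ x : X, h (etaFree x) = f x := by
  classical
  refine ⟨SC X, fun lam hlam w x => scComb_apply hlam w x,
    SC_cancellative X, SC_iterative X, fun Y T f => ?_⟩
  have henum : ∀ w : FreeSC X, ∃ e : ℕ → X, Function.support w.1 ⊆ Set.range e := by
    intro w
    obtain ⟨e, he⟩ := w.2.2.1.exists_eq_range (support_nonempty w.2)
    exact ⟨e, he.le⟩
  choose enum henum using henum
  refine ⟨fun w => T.comb (lamOf w.1 (enum w)) (fun i => f (enum w i)), ⟨?_, ?_⟩, ?_⟩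
  · -- superaffine
    intro κ hκ ws
    have hv : (SC X).comb κ ws = scComb κ ws := rfl
    set v : FreeSC X := scComb κ ws with hvdef
    have hsc : (Function.support v.1 ∪ ⋃ i, Function.support (ws i).1).Countable :=
      (v.2.2.1).union (Set.countable_iUnion fun i => (ws i).2.2.1)
    have hsne : (Function.support v.1 ∪ ⋃ i, Function.support (ws i).1).Nonempty :=
      (support_nonempty v.2).mono Set.subset_union_left
    obtain ⟨E, hE⟩ := hsc.exists_eq_range hsne
    have hcovv : Function.support v.1 ⊆ Set.range E :=
      Set.Subset.trans Set.subset_union_left hE.le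
    have hcovi : ∀ i, Function.support (ws i).1 ⊆ Set.range E := by
      intro i t ht
      exact hE.le (Or.inr (Set.mem_iUnion.2 ⟨i, ht⟩))
    show T.comb (lamOf v.1 (enum v)) (fun i => f (enum v i))
        = T.comb κ fun i =>
            T.comb (lamOf (ws i).1 (enum (ws i))) (fun k => f (enum (ws i) k))
    have e1 : T.comb (lamOf v.1 (enum v)) (fun i => f (enum v i))
        = T.comb (lamOf v.1 E) (fun i => f (E i)) :=
      enumIndep T f v.2 (henum v) hcovv
    have e2 : (fun i => T.comb (lamOf (ws i).1 (enum (ws i))) (fun k => f (enum (ws i) k)))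
        = fun i => T.comb (lamOf (ws i).1 E) (fun k => f (E k)) :=
      funext fun i => enumIndep T f (ws i).2 (henum (ws i)) (hcovi i)
    have e3 := T.compos κ hκ (fun i => lamOf (ws i).1 E)
      (fun i => lamOf_isWeight (ws i).2 (hcovi i)) (fun k => f (E k))
    have e4 : (fun j => ∑' i, κ i * lamOf (ws i).1 E j) = lamOf v.1 E := by
      funext j
      by_cases hf : ∀ k < j, E k ≠ E j
      · have hterm : ∀ i, κ i * lamOf (ws i).1 E j = κ i * (ws i).1 (E j) :=
          fun i => by rw [lamOf_eq_of_focc hf]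
        rw [tsum_congr hterm, lamOf_eq_of_focc hf]
        exact (scComb_apply hκ ws (E j)).symm
      · rw [lamOf_eq_zero hf]
        have hterm : ∀ i, κ i * lamOf (ws i).1 E j = 0 :=
          fun i => by rw [lamOf_eq_zero hf, mul_zero]
        exact (tsum_congr hterm).trans tsum_zero
    rw [e1, e2, e3, e4]
  · -- eta condition
    intro x
    have hcov1 : Function.support (etaFree x).1 ⊆ Set.range (fun _ : ℕ => x) := by
      intro t ht
      simp only [Function.mem_support, etaFree_apply] at ht
      by_cases h : t = x
      · exact ⟨0, h.symm⟩
      · exact absurd (if_neg h) ht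
    have hei := enumIndep T f (etaFree x).2 (henum (etaFree x)) hcov1
    show T.comb (lamOf (etaFree x).1 (enum (etaFree x))) (fun i => f (enum (etaFree x) i))
        = f x
    rw [hei]
    have hlam : lamOf (etaFree x).1 (fun _ : ℕ => x) = delta 0 := by
      funext j
      rcases Nat.eq_zero_or_pos j with hj | hj
      · subst hj
        rw [lamOf_eq_of_focc (fun k hk => absurd hk (Nat.not_lt_zero k)),
          etaFree_apply, if_pos rfl]
        simp [delta]
      · rw [lamOf_eq_zero (by push_neg; exact ⟨0, hj, rfl⟩)]
        simp [delta, hj.ne']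
    rw [hlam, comb_delta]
  · -- uniqueness
    rintro h' ⟨hsa, heta⟩
    funext w
    have hkey : (SC X).comb (lamOf w.1 (enum w)) (fun i => etaFree (enum w i)) = w :=
      (comb_lamOf_eta w.2 (henum w)).trans (by exact rfl)
    conv_lhs => rw [← hkey]
    rw [hsa _ (lamOf_isWeight w.2 (henum w))]
    exact congrArg _ (funext fun i => heta (enum w i))

end FreeSCAux
/-- `FreeSC X`, with the pointwise superconvex combinations and insertion of
generators `etaFree`, is the free superconvex set over `X`; moreover it is
cancellative (and hence iterative). -/
theorem freeSC_is_free_superconvex (X : Type) :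
    ∃ S : SuperconvexStr (FreeSC X),
      (∀ lam, IsWeight lam → ∀ w : ℕ → FreeSC X, ∀ x : X,
        (S.comb lam w).1 x = ∑' i, lam i * (w i).1 x) ∧
      S.Cancellative ∧ S.Iterative ∧
      ∀ (Y : Type) (T : SuperconvexStr Y) (f : X → Y),
        ∃! h : FreeSC X → Y, IsSuperaffine S T h ∧ ∀ x : X, h (etaFree x) = f x := FreeSCAux.freeSC_main X
end

section
/- Let (A, m) be a set with a binary operation. Then A is iterative if and only if there exists an infinitary operation M : (ℕ → A) → A satisfying: (Unfolding) M(x₀, x₁, x₂, …) = m(x₀, M(x₁, x₂, x₃, …)) for every sequence (xᵢ); and (Canonicity) if yᵢ = m(xᵢ, y_{i+1}) for all i, then y₀ = M(x₀, x₁, x₂, …). Moreover, if A is iterative then there is exactly one operation M : (ℕ → A) → A satisfying Unfolding. -/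
/-- The unfolding property of an infinitary operation `M` with respect to `m`. -/
def Unfolding {A : Type} (m : A → A → A) (M : (ℕ → A) → A) : Prop :=
  ∀ x : ℕ → A, M x = m (x 0) (M fun i => x (i + 1))

/-- The canonicity property of an infinitary operation `M` with respect to `m`. -/
def Canonicity {A : Type} (m : A → A → A) (M : (ℕ → A) → A) : Prop :=
  ∀ x y : ℕ → A, (∀ i, y i = m (x i) (y (i + 1))) → y 0 = M x

private def traj {A X : Type} (c : X → A × X) (x : X) : ℕ → X
  | 0 => x
  | n+1 => (c (traj c x n)).2

private def outs {A X : Type} (c : X → A × X) (x : X) (n : ℕ) : A :=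
  (c (traj c x n)).1

private lemma traj_shift {A X : Type} (c : X → A × X) (x : X) (n : ℕ) :
    traj c (c x).2 n = traj c x (n+1) := by
  induction n with
  | zero => rfl
  | succ n ih => simp [traj, ih]

/-- A binary operation is iterative iff it admits an infinitary operation
satisfying unfolding and canonicity; moreover, if it is iterative, the
operation satisfying unfolding is unique. -/
theorem iterative_iff_unfolding_canonicity (A : Type) (m : A → A → A) :
    (Iterative m ↔ ∃ M : (ℕ → A) → A, Unfolding m M ∧ Canonicity m M) ∧
    (Iterative m → ∃! M : (ℕ → A) → A, Unfolding m M) := by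
  constructor
  · constructor
    · intro hit
      obtain ⟨u, hu, huniq⟩ := hit (ℕ → A) (fun x => (x 0, fun i => x (i+1)))
      refine ⟨u, hu, ?_⟩
      intro x y hy
      obtain ⟨w, hw, hwuniq⟩ := hit ℕ (fun i => (x i, i+1))
      have h1 : y = w := hwuniq y hy
      have h2 : (fun i => u (fun j => x (i+j))) = w := by
        apply hwuniq
        intro i
        have := hu (fun j => x (i+j))
        simp only [] at this ⊢
        have he : (fun k => x (i + (k+1))) = (fun j => x (i+1+j)) := by
          funext j; congr 1; omega
        rw [this]
        simp only [he, Nat.add_zero]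
      have h3 : y 0 = u (fun j => x (0+j)) := by rw [h1, ← h2]
      simpa using h3
    · rintro ⟨M, hM, hC⟩ X c
      refine ⟨fun x => M (outs c x), ?_, ?_⟩
      · intro x
        show M (outs c x) = m (c x).1 (M (outs c (c x).2))
        rw [hM (outs c x)]
        have he : (fun i => outs c x (i+1)) = outs c (c x).2 := by
          funext i; simp [outs, traj_shift]
        rw [he]
        rfl
      · intro v hv
        funext x
        exact (hC (outs c x) (fun i => v (traj c x i)) (fun i => by
          simpa [outs, traj] using hv (traj c x i)))
  · intro hit
    obtain ⟨u, hu, huniq⟩ := hit (ℕ → A) (fun x => (x 0, fun i => x (i+1)))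
    exact ⟨u, hu, fun M hM => huniq M hM⟩
end

section
/- Let (A, m) and (A', m') be iterative midpoint sets, and let M : (ℕ → A) → A and M' : (ℕ → A') → A' be their unique associated infinitary operations satisfying the unfolding equation. Then every midpoint homomorphism f : A → A' is also a homomorphism with respect to the infinitary operations: f(M(x₀, x₁, x₂, …)) = M'(f(x₀), f(x₁), f(x₂), …) for every sequence (xᵢ) in A. -/
/-- A midpoint homomorphism between iterative midpoint sets is also a
homomorphism with respect to the associated infinitary operations. -/
theorem hom_preserves_infinitary (A A' : Type) (m : A → A → A) (m' : A' → A' → A')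
    (hm : IsMidpoint m) (hm' : IsMidpoint m')
    (hit : Iterative m) (hit' : Iterative m')
    (M : (ℕ → A) → A) (M' : (ℕ → A') → A')
    (hM : Unfolding m M) (hM' : Unfolding m' M')
    (f : A → A') (hf : ∀ x y, f (m x y) = m' (f x) (f y)) :
    ∀ x : ℕ → A, f (M x) = M' (fun i => f (x i)) := by
  obtain ⟨u, hu, huniq⟩ := hit' (ℕ → A) (fun x => (f (x 0), fun i => x (i + 1)))
  have h1 : (fun x : ℕ → A => f (M x)) = u := by
    apply huniq
    intro x
    simp only []
    rw [hM x, hf]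
  have h2 : (fun x : ℕ → A => M' (fun i => f (x i))) = u := by
    apply huniq
    intro x
    exact hM' (fun i => f (x i))
  intro x
  rw [show f (M x) = (fun x : ℕ → A => f (M x)) x from rfl, h1,
    show M' (fun i => f (x i)) = (fun x : ℕ → A => M' (fun i => f (x i))) x from rfl, h2]
end

section
/- Every cancellative supermidpoint set is a midpoint-convex body under its associated binary operation: if (A, M) is a supermidpoint set whose associated binary operation m(x,y) = M(x,y,y,y,…) is cancellative, then m satisfies the midpoint axioms (idempotency, commutativity, transposition) and is iterative; in particular M satisfies canonicity: if yᵢ = m(xᵢ, y_{i+1}) for all i, then y₀ = M(x₀, x₁, x₂, …). -/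
/-- A supermidpoint structure on `A`: an infinitary operation satisfying
idempotency, commutativity, transposition and unfolding. -/
structure SupermidpointStr (A : Type) where
  M : (ℕ → A) → A
  idem : ∀ x : A, M (fun _ => x) = x
  comm : ∀ x y : A, M (fun i => if i = 0 then x else y) = M (fun i => if i = 0 then y else x)
  transp : ∀ x : ℕ → ℕ → A,
    M (fun i => M (fun j => x i j)) = M (fun j => M (fun i => x i j))
  unfoldAx : ∀ x : ℕ → A,
    M x = M (fun i => if i = 0 then x 0 else M (fun j => x (j + 1)))

/-- The binary operation associated with a supermidpoint structure:
`m(x,y) = M(x,y,y,y,…)`. -/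
def SupermidpointStr.mid {A : Type} (S : SupermidpointStr A) (x y : A) : A :=
  S.M (fun i => if i = 0 then x else y)

namespace SupermidpointStr

variable {A : Type} (S : SupermidpointStr A)

lemma mid_idem (x : A) : S.mid x x = x := by
  have : (fun i : ℕ => if i = 0 then x else x) = fun _ => x := by
    funext i; split <;> rfl
  rw [mid, this, S.idem]

lemma mid_comm (x y : A) : S.mid x y = S.mid y x := S.comm x y

lemma unfold' (x : ℕ → A) : S.M x = S.mid (x 0) (S.M fun i => x (i + 1)) := by
  rw [mid]; exact S.unfoldAx x

/-- `M` distributes over `mid`. -/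
lemma M_mid (a b : ℕ → A) :
    S.M (fun i => S.mid (a i) (b i)) = S.mid (S.M a) (S.M b) := by
  have h1 : (fun i => S.mid (a i) (b i))
      = fun i => S.M (fun j => if j = 0 then a i else b i) := rfl
  rw [h1, S.transp fun i j => if j = 0 then a i else b i]
  have h2 : (fun j => S.M fun i => if j = 0 then a i else b i)
      = fun j => if j = 0 then S.M a else S.M b := by
    funext j; split <;> rfl
  rw [h2]; rfl

lemma mid_transp (x y z w : A) :
    S.mid (S.mid x y) (S.mid z w) = S.mid (S.mid x z) (S.mid y w) := by
  have := S.M_mid (fun i => if i = 0 then x else y) (fun i => if i = 0 then z else w)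
  rw [show (fun i : ℕ => S.mid (if i = 0 then x else y) (if i = 0 then z else w))
      = fun i : ℕ => if i = 0 then S.mid x z else S.mid y w by
    funext i; split <;> rfl] at this
  exact (this.symm.trans rfl)

lemma canonicity (hc : Cancellative S.mid) : Canonicity S.mid S.M := by
  intro x y hy
  have h1 : S.M y = S.mid (S.M x) (S.M fun i => y (i + 1)) := by
    calc S.M y = S.M (fun i => S.mid (x i) (y (i + 1))) := by
          congr 1; funext i; exact hy i
      _ = S.mid (S.M x) (S.M fun i => y (i + 1)) := S.M_mid _ _
  have h2 : S.M y = S.mid (y 0) (S.M fun i => y (i + 1)) := S.unfold' y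
  have := h2.symm.trans h1
  rw [S.mid_comm (y 0), S.mid_comm (S.M x)] at this
  exact hc _ _ _ this

end SupermidpointStr

/-- Every cancellative supermidpoint set is a midpoint-convex body under the
associated binary operation; in particular `M` satisfies canonicity. -/
theorem cancellative_supermidpoint_is_mconvex_body (A : Type) (S : SupermidpointStr A)
    (hc : Cancellative S.mid) :
    IsMidpoint S.mid ∧ Iterative S.mid ∧ Canonicity S.mid S.M := by
  refine ⟨⟨S.mid_idem, S.mid_comm, S.mid_transp⟩, ?_, S.canonicity hc⟩
  intro X c
  set a : X → A := fun x => (c x).1 with ha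
  set b : X → X := fun x => (c x).2 with hb
  refine ⟨fun x => S.M (fun i => a (b^[i] x)), ?_, ?_⟩
  · intro x
    have := S.unfold' (fun i => a (b^[i] x))
    simpa [Function.iterate_succ_apply] using this
  · intro v hv
    funext x
    have := S.canonicity hc (fun i => a (b^[i] x)) (fun i => v (b^[i] x)) ?_
    · exact this
    · intro i
      have := hv (b^[i] x)
      simpa [Function.iterate_succ_apply'] using this
end

section
/- (Flattening) Let (A, m) be an iterative midpoint set with associated infinitary operation M, and write m₀(x) = x and mₙ(x₀, …, xₙ) = m(x₀, m_{n-1}(x₁, …, xₙ)) for n ≥ 1. Then for every double sequence (x_{ij})_{i,j∈ℕ} in A: Mᵢ(Mⱼ x_{ij}) = M_l m( m_{l+1}(x_{0(l+1)}, x_{1(l+1)}, …, x_{l(l+1)}, x_{ll}), m_{l+1}(x_{(l+1)0}, x_{(l+1)1}, …, x_{(l+1)l}, x_{ll}) ). -/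
/-- The derived `(n+1)`-ary midpoint operations: `m₀(x) = x` and
`mₙ(x₀,…,xₙ) = m(x₀, m_{n-1}(x₁,…,xₙ))`, applied to the first `n+1`
entries of a sequence. -/
def mfold {A : Type} (m : A → A → A) : ℕ → (ℕ → A) → A
  | 0, x => x 0
  | n + 1, x => m (x 0) (mfold m n fun i => x (i + 1))

section Aux
variable {A : Type} (m : A → A → A)

lemma canon_of_iter (hit : Iterative m) {M : (ℕ → A) → A} (hM : Unfolding m M) :
    Canonicity m M := by
  intro x y hy
  obtain ⟨u, hu, huniq⟩ := hit ℕ (fun n => (x n, n + 1))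
  have h1 : y = u := huniq y hy
  have h2 : (fun n => M fun i => x (n + i)) = u := by
    apply huniq
    intro n
    show (M fun i => x (n + i)) = m (x n) (M fun i => x (n + 1 + i))
    have h := hM (fun i => x (n + i))
    rw [h]
    congr 2
    funext i
    congr 1
    omega
  have : y 0 = M fun i => x (0 + i) := by rw [h1, ← h2]
  simpa using this

lemma M_unfold' {M : (ℕ → A) → A} (hM : Unfolding m M) (x : ℕ → A) (n : ℕ) :
    (M fun k => x (n + k)) = m (x n) (M fun k => x (n + 1 + k)) := by
  have h := hM (fun k => x (n + k))
  rw [h]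
  congr 2
  funext k
  congr 1
  omega

lemma M_hom (hm : IsMidpoint m) (hit : Iterative m) {M : (ℕ → A) → A}
    (hM : Unfolding m M) (u v : ℕ → A) :
    m (M u) (M v) = M fun i => m (u i) (v i) := by
  have hrec : ∀ i, (fun i => m (M fun k => u (i + k)) (M fun k => v (i + k))) i
      = m (m (u i) (v i))
        ((fun i => m (M fun k => u (i + k)) (M fun k => v (i + k))) (i + 1)) := by
    intro i
    simp only
    rw [M_unfold' m hM u i, M_unfold' m hM v i, hm.2.2]
  have h := canon_of_iter m hit hM (fun i => m (u i) (v i)) _ hrec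
  simp only [Nat.zero_add] at h
  exact h

lemma mfold_pair (hm : IsMidpoint m) : ∀ (n : ℕ) (u v : ℕ → A),
    m (mfold m n u) (mfold m n v) = mfold m n (fun i => m (u i) (v i))
  | 0, u, v => rfl
  | n + 1, u, v => by
    simp only [mfold]
    rw [hm.2.2, mfold_pair hm n]

lemma mfold_congr : ∀ (n : ℕ) (u v : ℕ → A), (∀ i, i ≤ n → u i = v i) →
    mfold m n u = mfold m n v
  | 0, u, v, h => h 0 (by omega)
  | n + 1, u, v, h => by
    simp only [mfold]
    rw [h 0 (by omega), mfold_congr n _ _ (fun i hi => h (i + 1) (by omega))]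

lemma mfold_fuse : ∀ (n : ℕ) (g : ℕ → A),
    mfold m (n + 1) g = mfold m n (fun i => if i = n then m (g n) (g (n + 1)) else g i)
  | 0, g => by simp [mfold]
  | n + 1, g => by
    rw [show mfold m (n + 1 + 1) g = m (g 0) (mfold m (n + 1) fun i => g (i + 1)) from rfl,
      mfold_fuse n (fun i => g (i + 1)),
      show mfold m (n + 1) (fun i => if i = n + 1 then m (g (n + 1)) (g (n + 1 + 1)) else g i)
        = m (if (0 : ℕ) = n + 1 then m (g (n + 1)) (g (n + 1 + 1)) else g 0)
          (mfold m n fun i =>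
            if i + 1 = n + 1 then m (g (n + 1)) (g (n + 1 + 1)) else g (i + 1)) from rfl]
    simp only [Nat.zero_ne_add_one, if_false]
    congr 1
    apply mfold_congr
    intro i hi
    by_cases h : i = n <;> simp [h]


def Dop (x : ℕ → ℕ → A) : ℕ → ℕ → A := fun i j =>
  if i < j then x i (j + 1) else if j < i then x (i + 1) j
  else m (m (x (i + 1) (i + 2)) (x (i + 2) (i + 1))) (x (i + 1) (i + 1))

def shd (x : ℕ → ℕ → A) : ℕ → ℕ → A := fun i j => x (i + 1) (j + 1)

def hookA (x : ℕ → ℕ → A) (l : ℕ) : A :=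
  m (mfold m (l + 1) (fun i => if i ≤ l then x i (l + 1) else x l l))
    (mfold m (l + 1) (fun i => if i ≤ l then x (l + 1) i else x l l))

lemma Dop_shd (x : ℕ → ℕ → A) : Dop m (shd x) = shd (Dop m x) := by
  funext i j
  simp only [Dop, shd]
  rcases lt_trichotomy i j with h | h | h
  · rw [if_pos h, if_pos (by omega : i + 1 < j + 1)]
  · subst h
    rw [if_neg (by omega), if_neg (by omega), if_neg (by omega), if_neg (by omega)]
  · rw [if_neg (by omega), if_pos h, if_neg (by omega), if_pos (by omega : j + 1 < i + 1)]

lemma hook_D (hm : IsMidpoint m) (x : ℕ → ℕ → A) (l : ℕ) :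
    hookA m x (l + 1) = hookA m (Dop m x) l := by
  unfold hookA
  rw [mfold_fuse m (l + 1), mfold_fuse m (l + 1), mfold_pair m hm, mfold_pair m hm]
  apply mfold_congr
  intro i hi
  rcases Nat.lt_or_ge i (l + 1) with h | h
  · rw [if_neg (by omega : ¬ i = l + 1), if_neg (by omega : ¬ i = l + 1),
      if_pos (by omega : i ≤ l + 1), if_pos (by omega : i ≤ l + 1),
      if_pos (by omega : i ≤ l), if_pos (by omega : i ≤ l)]
    simp only [Dop]
    rw [if_pos (by omega : i < l + 1), if_neg (by omega), if_pos (by omega : i < l + 1)]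
  · have hi' : i = l + 1 := by omega
    subst hi'
    simp only [if_pos rfl, if_pos (le_refl (l + 1)),
      if_neg (show ¬ l + 1 ≤ l by omega), if_neg (show ¬ l + 1 + 1 ≤ l + 1 by omega),
      Dop, if_neg (show ¬ l < l by omega)]
    simp only [show l + 1 + 1 = l + 2 from rfl, hm.1, eq_self_iff_true, if_true]
    rw [hm.2.2, hm.1]

lemma hook_iter (hm : IsMidpoint m) : ∀ (l : ℕ) (x : ℕ → ℕ → A),
    hookA m x l = hookA m ((Dop m)^[l] x) 0
  | 0, x => rfl
  | l + 1, x => by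
    rw [hook_D m hm, hook_iter hm l (Dop m x), ← Function.iterate_succ_apply]


lemma F_step (hm : IsMidpoint m) (hit : Iterative m) {M : (ℕ → A) → A}
    (hM : Unfolding m M) (z : ℕ → ℕ → A) :
    M (fun i => M (fun j => z i j)) =
      m (M (fun j => z 0 j)) (m (M fun i => z (i + 1) 0)
        (M (fun i => M (fun j => z (i + 1) (j + 1))))) := by
  have h1 := hM (fun i => M (fun j => z i j))
  rw [h1]
  congr 1
  rw [M_hom m hm hit hM (fun i => z (i + 1) 0) (fun i => M fun j => z (i + 1) (j + 1))]
  congr 1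
  funext i
  exact hM (fun j => z (i + 1) j)

lemma two_step (hit : Iterative m) {M : (ℕ → A) → A} (hM : Unfolding m M)
    (P Q : (ℕ → ℕ → A) → A) (u w : (ℕ → ℕ → A) → A)
    (hu : ∀ z, u z = m (P z) (m (Q z) (u (shd z))))
    (hw : ∀ z, w z = m (P z) (m (Q z) (w (shd z)))) (z : ℕ → ℕ → A) :
    u z = w z := by
  have hc := canon_of_iter m hit hM
  have rep : ∀ f : (ℕ → ℕ → A) → A, (∀ y, f y = m (P y) (m (Q y) (f (shd y)))) →
      f z = M (fun k => if k % 2 = 0 then P (shd^[k / 2] z) else Q (shd^[k / 2] z)) := by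
    intro f hf
    have h := hc (fun k => if k % 2 = 0 then P (shd^[k / 2] z) else Q (shd^[k / 2] z))
      (fun k => if k % 2 = 0 then f (shd^[k / 2] z)
        else m (Q (shd^[k / 2] z)) (f (shd^[k / 2 + 1] z))) ?_
    · simpa using h
    · intro k
      rcases Nat.even_or_odd k with ⟨t, ht⟩ | ⟨t, ht⟩
      · subst ht
        have e1 : (t + t) % 2 = 0 := by omega
        have e2 : (t + t) / 2 = t := by omega
        have e3 : (t + t + 1) % 2 = 1 := by omega
        have e4 : (t + t + 1) / 2 = t := by omega
        simp only [e1, e2, e3, e4]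
        norm_num
        rw [← Function.iterate_succ_apply, Function.iterate_succ_apply']
        exact hf _
      · subst ht
        have e1 : (2 * t + 1) % 2 = 1 := by omega
        have e2 : (2 * t + 1) / 2 = t := by omega
        have e3 : (2 * t + 1 + 1) % 2 = 0 := by omega
        have e4 : (2 * t + 1 + 1) / 2 = t + 1 := by omega
        simp only [e1, e2, e3, e4]
        norm_num
  rw [rep u hu, rep w hw]

lemma idI (hm : IsMidpoint m) (p q r s d e u v g : A) :
    m (m (m q p) (m r p)) (m (m (m (m d e) s) u) (m v g)) =
      m (m p (m q u)) (m (m r v) (m (m (m d s) (m e s)) g)) := by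
  obtain ⟨hid, hcm, htr⟩ := hm
  have hw : m (m d s) (m e s) = m (m d e) s := by rw [htr, hid]
  rw [hw]
  have h0 : m (m q p) (m r p) = m (m p p) (m q r) := by rw [htr, hcm]
  set c := m (m d e) s with hc
  rw [h0, htr p p q r, htr (m p q) (m p r) (m c u) (m v g), htr p q c u, htr p r v g,
    htr (m p c) (m q u) (m p v) (m r g), htr p c p v,
    htr (m p p) (m c v) (m q u) (m r g), hid p, hcm c v, htr v c r g, hcm v r]


lemma Psi_rec (hm : IsMidpoint m) (hit : Iterative m) {M : (ℕ → A) → A}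
    (hM : Unfolding m M) (z : ℕ → ℕ → A) :
    m (hookA m z 0) (M (fun i => M (fun j => Dop m z i j))) =
      m (M (fun j => z 0 j)) (m (M (fun i => z (i + 1) 0))
        (m (hookA m (shd z) 0) (M (fun i => M (fun j => Dop m (shd z) i j))))) := by
  have hP : (M fun j => z 0 j) = m (z 0 0) (m (z 0 1) (M fun j => z 0 (j + 2))) := by
    have h1 := hM (fun j => z 0 j)
    have h2 := hM (fun j => z 0 (j + 1))
    rw [h1, h2]
  have hQ : (M fun i => z (i + 1) 0) = m (z 1 0) (M fun i => z (i + 2) 0) := by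
    have h1 := hM (fun i => z (i + 1) 0)
    rw [h1]
  have hPD : (M fun j => Dop m z 0 j)
      = m (m (m (z 1 2) (z 2 1)) (z 1 1)) (M fun j => z 0 (j + 2)) := by
    have h1 := hM (fun j => Dop m z 0 j)
    rw [h1]
    have e1 : Dop m z 0 0 = m (m (z 1 2) (z 2 1)) (z 1 1) := by
      simp only [Dop, if_neg (lt_irrefl 0)]
    have e2 : (fun i => Dop m z 0 (i + 1)) = fun j => z 0 (j + 2) := by
      funext i
      simp only [Dop, if_pos (Nat.succ_pos i)]
    rw [e1, e2]
  have hQD : (M fun i => Dop m z (i + 1) 0) = M (fun i => z (i + 2) 0) := by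
    congr 1
  have hH : hookA m z 0 = m (m (z 0 1) (z 0 0)) (m (z 1 0) (z 0 0)) := by
    simp [hookA, mfold]
  have hHs : hookA m (shd z) 0 = m (m (z 1 2) (z 1 1)) (m (z 2 1) (z 1 1)) := by
    simp [hookA, mfold, shd]
  have hg : (M fun i => M (fun j => Dop m (shd z) i j))
      = M (fun i => M (fun j => Dop m z (i + 1) (j + 1))) := by
    congr 1
    funext i
    congr 1
    funext j
    rw [Dop_shd m z]
    rfl
  rw [F_step m hm hit hM (Dop m z), hPD, hQD, hP, hQ, hH, hHs, hg]
  exact idI m hm (z 0 0) (z 0 1) (z 1 0) (z 1 1) (z 1 2) (z 2 1)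
    (M fun j => z 0 (j + 2)) (M fun i => z (i + 2) 0)
    (M (fun i => M (fun j => Dop m z (i + 1) (j + 1))))

end Aux

/-- Flattening: nested applications of `M` reduce to a single application over
terms built from the binary `m` alone. -/
theorem flattening (A : Type) (m : A → A → A) (hm : IsMidpoint m) (hit : Iterative m)
    (M : (ℕ → A) → A) (hM : Unfolding m M) :
    ∀ x : ℕ → ℕ → A,
      M (fun i => M (fun j => x i j)) =
        M (fun l => m
          (mfold m (l + 1) (fun i => if i ≤ l then x i (l + 1) else x l l))
          (mfold m (l + 1) (fun i => if i ≤ l then x (l + 1) i else x l l))) := by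
  intro x
  have hstep : ∀ z : ℕ → ℕ → A, M (fun i => M (fun j => z i j))
      = m (hookA m z 0) (M (fun i => M (fun j => Dop m z i j))) := by
    intro z
    exact two_step m hit hM (fun z => M (fun j => z 0 j)) (fun z => M (fun i => z (i + 1) 0))
      (fun z => M (fun i => M (fun j => z i j)))
      (fun z => m (hookA m z 0) (M (fun i => M (fun j => Dop m z i j))))
      (fun z => F_step m hm hit hM z) (fun z => Psi_rec m hm hit hM z) z
  have key := canon_of_iter m hit hM (fun l => hookA m x l)
      (fun l => M (fun i => M (fun j => (Dop m)^[l] x i j))) ?_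
  · exact key
  · intro l
    show M (fun i => M (fun j => (Dop m)^[l] x i j))
      = m (hookA m x l) (M (fun i => M (fun j => (Dop m)^[l + 1] x i j)))
    rw [hstep ((Dop m)^[l] x), ← hook_iter m hm l x]
    congr 3
    funext i
    congr 1
    funext j
    rw [Function.iterate_succ_apply' (Dop m) l x]
end

section
/- Every cancellative superconvex set is iterative: if X is a superconvex set such that for all λ ∈ (0,1), λ·x + (1−λ)·z = λ·y + (1−λ)·z implies x = y, then for all sequences (xᵢ), (yᵢ) in X and weights λᵢ, μᵢ ∈ (0,1) with λᵢ + μᵢ = 1, xᵢ = λᵢ·yᵢ + μᵢ·x_{i+1} for all i, and lim_{n→∞} Π_{i<n} μᵢ = 0, it holds that x₀ = Σ'ᵢ (λᵢ Π_{j<i} μⱼ)·yᵢ. -/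
lemma weight_summable {f : ℕ → ℝ} (h : IsWeight f) : Summable f := by
  by_contra hs
  have h0 := tsum_eq_zero_of_not_summable hs
  rw [h.2] at h0
  norm_num at h0

lemma weight_le_one {f : ℕ → ℝ} (h : IsWeight f) (j : ℕ) : f j ≤ 1 := by
  have := Summable.le_tsum (weight_summable h) j (fun i _ => h.1 i)
  rwa [h.2] at this

noncomputable def dirac (k : ℕ) : ℕ → ℝ := fun j => if j = k then 1 else 0

lemma tsum_single {f : ℕ → ℝ} (a : ℕ) (h : ∀ j, j ≠ a → f j = 0) : ∑' j, f j = f a := by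
  rw [tsum_eq_sum (s := {a}) (fun b hb => h b (by simpa using hb))]
  simp

lemma tsum_pair {f : ℕ → ℝ} {a b : ℕ} (hab : a ≠ b)
    (h : ∀ j, j ≠ a → j ≠ b → f j = 0) : ∑' j, f j = f a + f b := by
  rw [tsum_eq_sum (s := {a, b}) (fun c hc => by
    simp only [Finset.mem_insert, Finset.mem_singleton] at hc
    push_neg at hc
    exact h c hc.1 hc.2)]
  exact Finset.sum_pair hab

lemma isWeight_dirac (k : ℕ) : IsWeight (dirac k) := by
  constructor
  · intro i; unfold dirac; split <;> norm_num
  · rw [tsum_single k (fun j hj => by simp [dirac, hj])]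
    simp [dirac]

lemma comb_dirac {X : Type} (S : SuperconvexStr X) (k : ℕ) (e : ℕ → X) :
    S.comb (dirac k) e = e k := by
  apply S.proj _ (isWeight_dirac k) k (by simp [dirac]) (fun i hi => by simp [dirac, hi])

lemma dirac_self (k : ℕ) : dirac k k = 1 := by simp [dirac]

lemma dirac_ne {j k : ℕ} (h : j ≠ k) : dirac k j = 0 := by simp [dirac, h]

lemma isWeight_mix {U V : ℕ → ℝ} (hU : IsWeight U) (hV : IsWeight V) {t : ℝ}
    (h0 : 0 ≤ t) (h1 : t ≤ 1) : IsWeight (fun j => t * U j + (1 - t) * V j) := by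
  constructor
  · intro i
    have h2 := hU.1 i; have h3 := hV.1 i
    have : (0:ℝ) ≤ 1 - t := by linarith
    positivity
  · rw [Summable.tsum_add ((weight_summable hU).mul_left t) ((weight_summable hV).mul_left (1-t)),
      tsum_mul_left, tsum_mul_left, hU.2, hV.2]
    ring

lemma pair_comb {X : Type} (S : SuperconvexStr X) {U V : ℕ → ℝ} (hU : IsWeight U)
    (hV : IsWeight V) {t : ℝ} (h0 : 0 ≤ t) (h1 : t ≤ 1) (e : ℕ → X) :
    S.pair t (S.comb U e) (S.comb V e) = S.comb (fun j => t * U j + (1 - t) * V j) e := by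
  have hpw : IsWeight (fun i => if i = 0 then t else if i = 1 then 1 - t else 0) := by
    constructor
    · intro i; dsimp only
      split
      · exact h0
      split
      · linarith
      · exact le_refl 0
    · dsimp only
      rw [tsum_pair (show (0:ℕ) ≠ 1 by norm_num) (fun j h0' h1' => by simp [h0', h1'])]
      simp
  have hfe : (fun i : ℕ => if i = 0 then S.comb U e else S.comb V e)
      = fun i => S.comb (if i = 0 then U else V) e := by
    funext i; split <;> rfl
  unfold SuperconvexStr.pair
  rw [hfe]
  rw [S.compos _ hpw (fun i => if i = 0 then U else V)
    (fun i => by split; exact hU; exact hV) e]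
  congr 1
  funext j
  rw [tsum_pair (show (0:ℕ) ≠ 1 by norm_num) (fun i hi0 hi1 => by simp [hi0, hi1])]
  simp


lemma comb_subst {X : Type} (S : SuperconvexStr X) {W : ℕ → ℝ} (hW : IsWeight W)
    (M : ℕ → ℕ → ℝ) (hM : ∀ i, IsWeight (M i)) {e : ℕ → X}
    (he : ∀ i, e i = S.comb (M i) e) :
    S.comb W e = S.comb (fun j => ∑' i, W i * M i j) e := by
  have h : S.comb W e = S.comb W (fun i => S.comb (M i) e) := by
    congr 1
    funext i
    exact he i
  rw [h, S.compos _ hW M hM e]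

lemma tsum_swap_weights {f : ℕ → ℕ → ℝ} {g : ℕ → ℝ}
    (hnn : ∀ k j, 0 ≤ f k j) (h1 : ∀ k, Summable (f k))
    (hg : ∀ k, ∑' j, f k j = g k) (hgs : Summable g) :
    (Summable fun j => ∑' k, f k j) ∧ (∑' j, ∑' k, f k j = ∑' k, g k) := by
  have hunc : Summable (Function.uncurry fun k j => f k j) := by
    rw [show (Function.uncurry fun k j => f k j) = (fun p : ℕ × ℕ => f p.1 p.2) from rfl,
      summable_prod_of_nonneg (fun p => hnn p.1 p.2)]
    refine ⟨h1, ?_⟩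
    have hfg : (fun k => ∑' j, f k j) = g := funext hg
    simpa [Function.uncurry, hfg] using hgs
  have hswap : Summable (fun p : ℕ × ℕ => f p.2 p.1) := hunc.prod_symm
  have hmarg := (summable_prod_of_nonneg (fun p : ℕ × ℕ => hnn p.2 p.1)).1 hswap
  refine ⟨hmarg.2, ?_⟩
  rw [Summable.tsum_comm' hunc h1 hmarg.1]
  exact tsum_congr hg

set_option maxHeartbeats 1000000 in
/-- Every cancellative superconvex set is iterative. -/
theorem cancellative_superconvex_iterative (X : Type) (S : SuperconvexStr X)
    (hc : S.Cancellative) : S.Iterative := by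
  intro x y lam mu hlam hmu hsum hrec hlim
  set P : ℕ → ℝ := fun n => ∏ j ∈ Finset.range n, mu j with hPdef
  have hPpos : ∀ n, 0 < P n := fun n => Finset.prod_pos (fun j _ => (hmu j).1)
  have hPne : ∀ n, P n ≠ 0 := fun n => (hPpos n).ne'
  have hPcanc : ∀ m (r : ℝ), P m * (r / P m) = r := fun m r => by
    rw [mul_comm]
    exact div_mul_cancel₀ r (hPne m)
  have hPsucc : ∀ n, P (n+1) = P n * mu n := fun n => Finset.prod_range_succ mu n
  have hP0 : P 0 = 1 := by simp [hPdef]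
  set w : ℕ → ℝ := fun i => lam i * P i with hwdef
  have hmu_eq : ∀ i, mu i = 1 - lam i := fun i => by linarith [hsum i]
  have hw_nonneg : ∀ i, 0 ≤ w i := fun i => mul_nonneg (hlam i).1.le (hPpos i).le
  have hpartial : ∀ m, ∑ i ∈ Finset.range m, w i = 1 - P m := by
    intro m
    induction m with
    | zero => simp [hP0]
    | succ m ih =>
        rw [Finset.sum_range_succ, ih, hPsucc m, hmu_eq m, hwdef]
        ring
  have hwsummable : Summable w := summable_of_sum_range_le hw_nonneg
      (fun n => by rw [hpartial n]; linarith [hPpos n])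
  have hwtsum : ∑' i, w i = 1 := by
    have h1 : HasSum w 1 := (hwsummable.hasSum_iff_tendsto_nat).2 (by
      simp only [hpartial]
      simpa using (tendsto_const_nhds (x := (1:ℝ)) (f := Filter.atTop)).sub hlim)
    exact h1.tsum_eq
  have hwweight : IsWeight w := ⟨hw_nonneg, hwtsum⟩
  have htail : ∀ m, ∑' i, w (i + m) = P m := by
    intro m
    have h2 := Summable.sum_add_tsum_nat_add m hwsummable
    rw [hpartial m, hwtsum] at h2
    linarith
  -- subsequence
  have hex : ∀ k N : ℕ, ∃ m, N ≤ m ∧ P m ≤ (1/2 : ℝ)^k := by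
    intro k N
    have hpos : (0:ℝ) < (1/2)^k := by positivity
    have hev : ∀ᶠ n in Filter.atTop, P n < (1/2:ℝ)^k := hlim.eventually (gt_mem_nhds hpos)
    obtain ⟨m, hm1, hm2⟩ := (hev.and (Filter.eventually_ge_atTop N)).exists
    exact ⟨m, hm2, hm1.le⟩
  obtain ⟨ns, hns0, hnsmono, hnsP⟩ : ∃ ns : ℕ → ℕ, ns 0 = 0 ∧ (∀ k, ns k < ns (k+1)) ∧
      (∀ k, P (ns k) ≤ (1/2:ℝ)^k) := by
    choose F hF1 hF2 using hex
    refine ⟨fun k => Nat.rec 0 (fun k ih => F (k+1) (ih+1)) k, rfl, fun k => ?_, fun k => ?_⟩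
    · exact Nat.lt_of_succ_le (hF1 (k+1) _)
    · cases k with
      | zero => simp [hP0]
      | succ k => exact hF2 (k+1) _
  have hnsle : ∀ k, ns k ≤ ns (k+1) := fun k => (hnsmono k).le
  set s : ℕ → ℝ := fun k => 2^k * P (ns k) with hsdef
  have hs_pos : ∀ k, 0 < s k := fun k => by
    have := hPpos (ns k); positivity
  have hs_le : ∀ k, s k ≤ 1 := by
    intro k
    have h3 := hnsP k
    have h4 : (2:ℝ)^k * P (ns k) ≤ 2^k * (1/2)^k :=
      mul_le_mul_of_nonneg_left h3 (by positivity)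
    calc s k ≤ (2:ℝ)^k * (1/2)^k := h4
    _ = 1 := by rw [← mul_pow]; norm_num
  have hs0 : s 0 = 1 := by simp [hsdef, hns0, hP0]
  -- atoms
  set e : ℕ → X := fun j => if j % 2 = 0 then y (j/2) else x (ns (j/2)) with hedef
  have he_even : ∀ i, e (2*i) = y i := by
    intro i
    simp only [hedef]
    rw [if_pos (by omega)]
    congr 1
    omega
  have he_odd : ∀ i, e (2*i+1) = x (ns i) := by
    intro i
    simp only [hedef]
    rw [if_neg (by omega)]
    congr 2
    omega
  -- expansion weights for x (ns k) down to block k+1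
  set XW : ℕ → ℕ → ℕ → ℝ := fun k t j =>
      if j % 2 = 0 ∧ t ≤ j/2 ∧ j/2 < ns (k+1) then w (j/2) / P t
      else if j = 2*(k+1)+1 then P (ns (k+1)) / P t else 0 with hXWdef
  have hXW_even_in : ∀ k t i, t ≤ i → i < ns (k+1) → XW k t (2*i) = w i / P t := by
    intro k t i h1 h2
    simp only [hXWdef]
    rw [show 2*i/2 = i by omega]
    rw [if_pos ⟨by omega, h1, h2⟩]
  have hXW_even_out : ∀ k t i, ¬(t ≤ i ∧ i < ns (k+1)) → XW k t (2*i) = 0 := by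
    intro k t i h1
    simp only [hXWdef]
    rw [show 2*i/2 = i by omega]
    rw [if_neg (by tauto), if_neg (by omega)]
  have hXW_odd_hit : ∀ k t, XW k t (2*(k+1)+1) = P (ns (k+1)) / P t := by
    intro k t
    simp only [hXWdef]
    rw [if_neg (by omega), if_pos trivial]
  have hXW_odd_miss : ∀ k t i, i ≠ k+1 → XW k t (2*i+1) = 0 := by
    intro k t i h1
    simp only [hXWdef]
    rw [if_neg (by omega), if_neg (by omega)]
  have hXWnn : ∀ k t j, 0 ≤ XW k t j := by
    intro k t j
    simp only [hXWdef]
    split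
    · exact div_nonneg (hw_nonneg _) (hPpos t).le
    split
    · exact div_nonneg (hPpos _).le (hPpos t).le
    · exact le_refl 0
  have hXWsum : ∀ k t, t ≤ ns (k+1) → ∑' j, XW k t j = 1 := by
    intro k t htm
    have hdisj : Disjoint ((Finset.Ico t (ns (k+1))).image (fun i => 2*i)) {2*(k+1)+1} := by
      simp only [Finset.disjoint_singleton_right, Finset.mem_image]
      rintro ⟨i, _, hi⟩
      omega
    rw [tsum_eq_sum (s := ((Finset.Ico t (ns (k+1))).image (fun i => 2*i)) ∪ {2*(k+1)+1}) ?hzero]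
    case hzero =>
      intro j hj
      simp only [Finset.mem_union, Finset.mem_image, Finset.mem_singleton, not_or, not_exists] at hj
      obtain ⟨i, hi | hi⟩ := Nat.even_or_odd' j <;> subst hi
      · refine hXW_even_out k t i ?_
        rintro ⟨hh1, hh2⟩
        exact hj.1 i ⟨Finset.mem_Ico.2 ⟨hh1, hh2⟩, rfl⟩
      · refine hXW_odd_miss k t i (fun hik => ?_)
        subst hik
        exact hj.2 rfl
    rw [Finset.sum_union hdisj, Finset.sum_image (by intro a _ b _ h; simp only at h; omega)]
    have hval : ∀ i ∈ Finset.Ico t (ns (k+1)), XW k t (2*i) = w i / P t := by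
      intro i hi
      simp only [Finset.mem_Ico] at hi
      exact hXW_even_in k t i hi.1 hi.2
    rw [Finset.sum_congr rfl hval, Finset.sum_singleton, hXW_odd_hit,
      ← Finset.sum_div, Finset.sum_Ico_eq_sub w htm, hpartial, hpartial]
    have hPt : P t - P (ns (k+1)) + P (ns (k+1)) = P t := by ring
    rw [show (1 - P (ns (k+1)) - (1 - P t)) = P t - P (ns (k+1)) by ring, ← add_div,
      hPt, div_self (hPne t)]
  have hXWweight : ∀ k t, t ≤ ns (k+1) → IsWeight (XW k t) :=
    fun k t ht => ⟨hXWnn k t, hXWsum k t ht⟩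
  -- E1 : expansion of x t
  have hE1 : ∀ k t, t ≤ ns (k+1) → x t = S.comb (XW k t) e := by
    intro k t htm
    obtain ⟨d, hd⟩ : ∃ d, t + d = ns (k+1) := ⟨ns (k+1) - t, by omega⟩
    clear htm
    induction d generalizing t with
    | zero =>
      have hteq : t = ns (k+1) := by omega
      have hXd : XW k t = dirac (2*(k+1)+1) := by
        funext j
        obtain ⟨i, hi | hi⟩ := Nat.even_or_odd' j <;> subst hi
        · rw [hXW_even_out k t i (by omega), dirac_ne (by omega)]
        · by_cases hik : i = k+1
          · subst hik
            rw [hXW_odd_hit, hteq, div_self (hPne _), dirac_self]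
          · rw [hXW_odd_miss k t i hik, dirac_ne (by omega)]
      rw [hXd, comb_dirac, he_odd (k+1), hteq]
    | succ d ih =>
      have h1 : x (t+1) = S.comb (XW k (t+1)) e := ih (t+1) (by omega)
      have h2 : y t = S.comb (dirac (2*t)) e := by rw [comb_dirac, he_even]
      rw [hrec t, h1, h2,
        pair_comb S (isWeight_dirac _) (hXWweight k (t+1) (by omega)) (hlam t).1.le (hlam t).2.le]
      congr 1
      funext j
      have hmut : (1:ℝ) - lam t = mu t := by rw [hmu_eq t]
      have htlt : t < ns (k+1) := by omega
      have hPt := hPne t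
      have hmt := (hmu t).1.ne'
      obtain ⟨i, hi | hi⟩ := Nat.even_or_odd' j <;> subst hi
      · by_cases hit : i = t
        · subst hit
          rw [dirac_self, hXW_even_out k (i+1) i (by omega),
            hXW_even_in k i i (le_refl i) htlt, hmut]
          have hwi : w i = lam i * P i := rfl
          rw [hwi]
          field_simp
          ring
        · rw [dirac_ne (by omega)]
          by_cases hcase : t+1 ≤ i ∧ i < ns (k+1)
          · rw [hXW_even_in k (t+1) i hcase.1 hcase.2, hXW_even_in k t i (by omega) hcase.2,
              hmut, hPsucc t]
            field_simp
            ring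
          · rw [hXW_even_out k (t+1) i (by omega), hXW_even_out k t i (by omega)]
            ring
      · rw [dirac_ne (by omega)]
        by_cases hik : i = k+1
        · subst hik
          rw [hXW_odd_hit, hXW_odd_hit, hmut, hPsucc t]
          field_simp
          ring
        · rw [hXW_odd_miss k (t+1) i hik, hXW_odd_miss k t i hik]
          ring
  -- tail weights (the element c_k)
  set Cw : ℕ → ℕ → ℝ := fun k j => if j % 2 = 0 ∧ ns k ≤ j/2 then w (j/2) / P (ns k) else 0
    with hCwdef
  have hCw_even_in : ∀ k i, ns k ≤ i → Cw k (2*i) = w i / P (ns k) := by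
    intro k i h1
    simp only [hCwdef]
    rw [show 2*i/2 = i by omega, if_pos ⟨by omega, h1⟩]
  have hCw_even_out : ∀ k i, i < ns k → Cw k (2*i) = 0 := by
    intro k i h1
    simp only [hCwdef]
    rw [show 2*i/2 = i by omega, if_neg (by omega)]
  have hCw_odd : ∀ k i, Cw k (2*i+1) = 0 := by
    intro k i
    simp only [hCwdef]
    rw [if_neg (by omega)]
  have hCwnn : ∀ k j, 0 ≤ Cw k j := by
    intro k j
    simp only [hCwdef]
    split
    · exact div_nonneg (hw_nonneg _) (hPpos _).le
    · exact le_refl 0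
  have hindsum : ∀ m, ∑' i, (if m ≤ i then w i else 0) = P m := by
    intro m
    have hgs : Summable (fun i => if m ≤ i then w i else 0) := by
      apply Summable.of_nonneg_of_le (fun i => ?_) (fun i => ?_) hwsummable
      · split
        · exact hw_nonneg i
        · exact le_refl 0
      · split
        · exact le_refl _
        · exact hw_nonneg i
    have h2 := Summable.sum_add_tsum_nat_add m hgs
    rw [Finset.sum_eq_zero (fun i hi => by
      rw [if_neg (by simp only [Finset.mem_range] at hi; omega)])] at h2
    have h3 : ∀ i, (if m ≤ i + m then w (i + m) else 0) = w (i + m) :=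
      fun i => if_pos (by omega)
    rw [tsum_congr h3] at h2
    rw [← h2, zero_add, htail m]
  have hCwsum : ∀ k, ∑' j, Cw k j = 1 := by
    intro k
    have heval : ∀ i, Cw k (2*i) = (if ns k ≤ i then w i else 0) / P (ns k) := by
      intro i
      rcases lt_or_ge i (ns k) with h | h
      · rw [hCw_even_out k i h, if_neg (by omega), zero_div]
      · rw [hCw_even_in k i h, if_pos h]
    have hse : Summable (fun i => Cw k (2*i)) := by
      rw [show (fun i => Cw k (2*i)) = fun i => (if ns k ≤ i then w i else 0) / P (ns k)
        from funext heval]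
      apply Summable.div_const
      apply Summable.of_nonneg_of_le (fun i => ?_) (fun i => ?_) hwsummable
      · split
        · exact hw_nonneg i
        · exact le_refl 0
      · split
        · exact le_refl _
        · exact hw_nonneg i
    have hso : Summable (fun i => Cw k (2*i+1)) := by
      rw [show (fun i => Cw k (2*i+1)) = fun _ => (0:ℝ) from funext (fun i => hCw_odd k i)]
      exact summable_zero
    rw [← tsum_even_add_odd hse hso, tsum_congr heval, tsum_congr (fun i => hCw_odd k i),
      tsum_zero, add_zero, tsum_div_const, hindsum, div_self (hPne _)]
  have hCwweight : ∀ k, IsWeight (Cw k) := fun k => ⟨hCwnn k, hCwsum k⟩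
  -- the target element written over atoms e
  have hceq : S.comb w y = S.comb (Cw 0) e := by
    have h := S.compos w hwweight (fun i => dirac (2*i)) (fun i => isWeight_dirac _) e
    rw [show (fun i => S.comb (dirac (2*i)) e) = y
      from funext (fun i => by rw [comb_dirac, he_even])] at h
    rw [h]
    congr 1
    funext j
    obtain ⟨i, hi | hi⟩ := Nat.even_or_odd' j <;> subst hi
    · rw [tsum_single i (fun i' hi' => by rw [dirac_ne (by omega), mul_zero]),
        dirac_self, mul_one, hCw_even_in 0 i (by omega), hns0, hP0, div_one]
    · rw [tsum_single 0 (fun i' hi' => by rw [dirac_ne (by omega), mul_zero]),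
        dirac_ne (by omega), mul_zero, hCw_odd]
  -- the three weight families
  set As : ℕ → ℕ → ℝ := fun k j => s k * dirac (2*k+1) j + (1 - s k) * dirac 1 j with hAsdef
  set Bs : ℕ → ℕ → ℝ := fun k j => s k * Cw k j + (1 - s k) * dirac 1 j with hBsdef
  set AX : ℕ → ℕ → ℝ := fun k j => s k * XW k (ns k) j + (1 - s k) * dirac 1 j with hAXdef
  have hAsw : ∀ k, IsWeight (As k) :=
    fun k => isWeight_mix (isWeight_dirac _) (isWeight_dirac _) (hs_pos k).le (hs_le k)
  have hBsw : ∀ k, IsWeight (Bs k) :=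
    fun k => isWeight_mix (hCwweight k) (isWeight_dirac _) (hs_pos k).le (hs_le k)
  have hAXw : ∀ k, IsWeight (AX k) :=
    fun k => isWeight_mix (hXWweight k (ns k) (hnsle k)) (isWeight_dirac _)
      (hs_pos k).le (hs_le k)
  have hAs0 : As 0 = dirac 1 := by
    funext j
    simp only [hAsdef, hs0]
    ring_nf
  have hBs0 : Bs 0 = Cw 0 := by
    funext j
    simp only [hBsdef, hs0]
    ring_nf
  -- a k = comb (As k) e expands to comb (AX k) e
  have haexp : ∀ k, S.comb (As k) e = S.comb (AX k) e := by
    intro k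
    have hM : ∀ i : ℕ, IsWeight (if i = 2*k+1 then XW k (ns k) else dirac i) := by
      intro i
      split
      · exact hXWweight k (ns k) (hnsle k)
      · exact isWeight_dirac i
    have he' : ∀ i, e i = S.comb (if i = 2*k+1 then XW k (ns k) else dirac i) e := by
      intro i
      split
      · rename_i hik
        subst hik
        rw [he_odd k]
        exact hE1 k (ns k) (hnsle k)
      · rw [comb_dirac]
    rw [comb_subst S (hAsw k) _ hM he']
    congr 1
    funext j
    by_cases hk : k = 0
    · subst hk
      rw [tsum_single 1 (fun i' hi' => by simp [hAsdef, dirac, hi'])]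
      rw [if_pos (show (1:ℕ) = 2*0+1 by norm_num)]
      have d1 : dirac (2*0+1) 1 = 1 := by simp [dirac]
      have d2 : dirac 1 1 = 1 := dirac_self 1
      simp only [hAsdef, hAXdef, hs0, d1, d2]
      ring
    · rw [tsum_pair (show 2*k+1 ≠ 1 by omega) (fun i' h1 h2 => by
        simp [hAsdef, dirac, h1, h2])]
      rw [if_pos rfl, if_neg (show (1:ℕ) ≠ 2*k+1 by omega)]
      have d1 : dirac (2*k+1) (2*k+1) = 1 := dirac_self _
      have d2 : dirac 1 (2*k+1) = 0 := dirac_ne (by omega)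
      have d3 : dirac (2*k+1) 1 = 0 := dirac_ne (by omega)
      have d4 : dirac 1 1 = 1 := dirac_self 1
      simp only [hAsdef, hAXdef, d1, d2, d3, d4]
      ring
  -- the key identity between weight functions
  have hZkey : ∀ k j, (1/3 : ℝ) * As (k+1) j + (2/3) * Bs k j
      = (1/3 : ℝ) * Bs (k+1) j + (2/3) * AX k j := by
    intro k j
    have hcore : (1/3:ℝ) * (s (k+1) * dirac (2*(k+1)+1) j) + (2/3) * (s k * Cw k j)
        = (1/3) * (s (k+1) * Cw (k+1) j) + (2/3) * (s k * XW k (ns k) j) := by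
      obtain ⟨i, hi | hi⟩ := Nat.even_or_odd' j <;> subst hi
      · rw [dirac_ne (by omega)]
        rcases lt_or_ge i (ns k) with hik | hik
        · rw [hCw_even_out k i hik, hCw_even_out (k+1) i (by have := hnsle k; omega),
            hXW_even_out k (ns k) i (by omega)]
        · rcases lt_or_ge i (ns (k+1)) with hik2 | hik2
          · rw [hCw_even_in k i hik, hCw_even_out (k+1) i hik2,
              hXW_even_in k (ns k) i hik hik2]
          · have e1 : s k * (w i / P (ns k)) = 2^k * w i := by
              simp only [hsdef]
              rw [mul_assoc, hPcanc]
            have e2 : s (k+1) * (w i / P (ns (k+1))) = 2^(k+1) * w i := by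
              simp only [hsdef]
              rw [mul_assoc, hPcanc]
            rw [hCw_even_in k i hik, hCw_even_in (k+1) i hik2,
              hXW_even_out k (ns k) i (by omega), e1, e2, pow_succ]
            ring
      · rw [hCw_odd, hCw_odd]
        by_cases hik : i = k+1
        · subst hik
          have e3 : s k * (P (ns (k+1)) / P (ns k)) = 2^k * P (ns (k+1)) := by
            simp only [hsdef]
            rw [mul_assoc, hPcanc]
          rw [dirac_self, hXW_odd_hit, e3]
          simp only [hsdef]
          rw [pow_succ]
          ring
        · rw [dirac_ne (by omega), hXW_odd_miss k (ns k) i hik]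
    simp only [hAsdef, hBsdef, hAXdef]
    linarith [hcore]
  -- geometric weights
  set ga : ℕ → ℝ := fun k => (1/2:ℝ)^(k+1) with hgadef
  have hgann : ∀ k, 0 ≤ ga k := fun k => by positivity
  have hgasum : ∑' k, ga k = 1 := by
    simp only [hgadef]
    rw [tsum_congr (fun k => by rw [pow_succ, mul_comm] : ∀ k : ℕ,
        (1/2:ℝ)^(k+1) = (1/2) * (1/2)^k),
      tsum_mul_left, tsum_geometric_of_lt_one (by norm_num) (by norm_num)]
    norm_num
  have hgaw : IsWeight ga := ⟨hgann, hgasum⟩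
  have hgasummable : Summable ga := weight_summable hgaw
  have hga0 : ga 0 = 1/2 := by norm_num [hgadef]
  have hgashift : ∀ k, ga k = 2 * ga (k+1) := by
    intro k
    simp only [hgadef]
    rw [pow_succ]
    ring
  have hga1 : ∑' k, ga (k+1) = 1/2 := by
    have h := Summable.tsum_eq_zero_add hgasummable
    rw [hgasum, hga0] at h
    linarith
  have hsble : ∀ (F : ℕ → ℕ → ℝ), (∀ k, IsWeight (F k)) → ∀ j,
      Summable (fun k => ga k * F k j) ∧ Summable (fun k => ga (k+1) * F (k+1) j) := by
    intro F hF j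
    have h1 : Summable (fun k => ga k * F k j) := by
      apply Summable.of_nonneg_of_le (fun k => mul_nonneg (hgann k) ((hF k).1 j))
        (fun k => ?_) hgasummable
      calc ga k * F k j ≤ ga k * 1 :=
            mul_le_mul_of_nonneg_left (weight_le_one (hF k) j) (hgann k)
      _ = ga k := mul_one _
    exact ⟨h1, (summable_nat_add_iff 1).2 h1⟩
  -- the sequence z and its two representations
  set z : ℕ → X := fun k => S.pair (1/3) (S.comb (As (k+1)) e) (S.comb (Bs k) e) with hzdef
  have hz1 : ∀ k, z k = S.comb (fun j => (1/3:ℝ) * As (k+1) j + (1 - 1/3) * Bs k j) e := by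
    intro k
    simp only [hzdef]
    rw [pair_comb S (hAsw (k+1)) (hBsw k) (by norm_num) (by norm_num)]
  have hz2 : ∀ k, z k = S.comb (fun j => (1/3:ℝ) * Bs (k+1) j + (1 - 1/3) * As k j) e := by
    intro k
    rw [hz1 k]
    have hfeq : (fun j => (1/3:ℝ) * As (k+1) j + (1 - 1/3) * Bs k j)
        = fun j => (1/3:ℝ) * Bs (k+1) j + (1 - 1/3) * AX k j := by
      funext j
      have h := hZkey k j
      linarith
    have h2 := pair_comb S (hBsw (k+1)) (hAXw k)
      (show (0:ℝ) ≤ 1/3 by norm_num) (show (1:ℝ)/3 ≤ 1 by norm_num) e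
    rw [hfeq, ← h2, ← haexp k]
    exact pair_comb S (hBsw (k+1)) (hAsw k) (by norm_num) (by norm_num) e
  have hflat1 : S.comb ga z
      = S.comb (fun j => ∑' k, ga k * ((1/3:ℝ) * As (k+1) j + (1 - 1/3) * Bs k j)) e := by
    have h1 : S.comb ga z = S.comb ga
        (fun k => S.comb (fun j => (1/3:ℝ) * As (k+1) j + (1 - 1/3) * Bs k j) e) := by
      congr 1
      funext k
      exact hz1 k
    rw [h1, S.compos ga hgaw _ (fun k => isWeight_mix (hAsw (k+1)) (hBsw k)
      (by norm_num) (by norm_num)) e]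
  have hflat2 : S.comb ga z
      = S.comb (fun j => ∑' k, ga k * ((1/3:ℝ) * Bs (k+1) j + (1 - 1/3) * As k j)) e := by
    have h1 : S.comb ga z = S.comb ga
        (fun k => S.comb (fun j => (1/3:ℝ) * Bs (k+1) j + (1 - 1/3) * As k j) e) := by
      congr 1
      funext k
      exact hz2 k
    rw [h1, S.compos ga hgaw _ (fun k => isWeight_mix (hBsw (k+1)) (hAsw k)
      (by norm_num) (by norm_num)) e]
  -- the common part Θ
  set Th : ℕ → ℝ := fun j => (2/3:ℝ) * (∑' k, ga (k+1) * As (k+1) j)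
      + (2/3) * (∑' k, ga (k+1) * Bs (k+1) j) with hThdef
  have hPhi : ∀ j, ∑' k, ga k * ((1/3:ℝ) * As (k+1) j + (1 - 1/3) * Bs k j)
      = Th j + (1/3) * Bs 0 j := by
    intro j
    obtain ⟨hsB, hsB'⟩ := hsble Bs hBsw j
    obtain ⟨hsA, hsA'⟩ := hsble As hAsw j
    have hsplit : ∀ k, ga k * ((1/3:ℝ) * As (k+1) j + (1 - 1/3) * Bs k j)
        = (2/3) * (ga (k+1) * As (k+1) j) + (2/3) * (ga k * Bs k j) := by
      intro k
      rw [hgashift k]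
      ring
    rw [tsum_congr hsplit, Summable.tsum_add (hsA'.mul_left _) (hsB.mul_left _),
      tsum_mul_left, tsum_mul_left, Summable.tsum_eq_zero_add hsB, hga0]
    simp only [hThdef]
    ring
  have hPsi : ∀ j, ∑' k, ga k * ((1/3:ℝ) * Bs (k+1) j + (1 - 1/3) * As k j)
      = Th j + (1/3) * As 0 j := by
    intro j
    obtain ⟨hsB, hsB'⟩ := hsble Bs hBsw j
    obtain ⟨hsA, hsA'⟩ := hsble As hAsw j
    have hsplit : ∀ k, ga k * ((1/3:ℝ) * Bs (k+1) j + (1 - 1/3) * As k j)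
        = (2/3) * (ga (k+1) * Bs (k+1) j) + (2/3) * (ga k * As k j) := by
      intro k
      rw [hgashift k]
      ring
    rw [tsum_congr hsplit, Summable.tsum_add (hsB'.mul_left _) (hsA.mul_left _),
      tsum_mul_left, tsum_mul_left, Summable.tsum_eq_zero_add hsA, hga0]
    simp only [hThdef]
    ring
  -- Θ sums to 2/3
  have hswA := tsum_swap_weights (f := fun k j => ga (k+1) * As (k+1) j) (g := fun k => ga (k+1))
    (fun k j => mul_nonneg (hgann _) ((hAsw _).1 j))
    (fun k => (weight_summable (hAsw (k+1))).mul_left _)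
    (fun k => by rw [tsum_mul_left, (hAsw (k+1)).2, mul_one])
    ((summable_nat_add_iff 1).2 hgasummable)
  have hswB := tsum_swap_weights (f := fun k j => ga (k+1) * Bs (k+1) j) (g := fun k => ga (k+1))
    (fun k j => mul_nonneg (hgann _) ((hBsw _).1 j))
    (fun k => (weight_summable (hBsw (k+1))).mul_left _)
    (fun k => by rw [tsum_mul_left, (hBsw (k+1)).2, mul_one])
    ((summable_nat_add_iff 1).2 hgasummable)
  have hThnn : ∀ j, 0 ≤ Th j := by
    intro j
    simp only [hThdef]
    have h1 : 0 ≤ ∑' k, ga (k+1) * As (k+1) j :=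
      tsum_nonneg (fun k => mul_nonneg (hgann _) ((hAsw _).1 j))
    have h2 : 0 ≤ ∑' k, ga (k+1) * Bs (k+1) j :=
      tsum_nonneg (fun k => mul_nonneg (hgann _) ((hBsw _).1 j))
    positivity
  have hThsum : ∑' j, Th j = 2/3 := by
    simp only [hThdef]
    rw [Summable.tsum_add (hswA.1.mul_left _) (hswB.1.mul_left _), tsum_mul_left, tsum_mul_left,
      hswA.2, hswB.2, hga1]
    norm_num
  have hNWw : IsWeight (fun j => (3/2:ℝ) * Th j) := by
    constructor
    · intro j
      have := hThnn j
      positivity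
    · rw [tsum_mul_left, hThsum]
      norm_num
  -- final cancellation
  have hfin1 : S.comb ga z
      = S.pair (1/3) (S.comb (Bs 0) e) (S.comb (fun j => (3/2:ℝ) * Th j) e) := by
    rw [hflat1, pair_comb S (hBsw 0) hNWw (by norm_num) (by norm_num)]
    congr 1
    funext j
    rw [hPhi j]
    ring
  have hfin2 : S.comb ga z
      = S.pair (1/3) (S.comb (As 0) e) (S.comb (fun j => (3/2:ℝ) * Th j) e) := by
    rw [hflat2, pair_comb S (hAsw 0) hNWw (by norm_num) (by norm_num)]
    congr 1
    funext j
    rw [hPsi j]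
    ring
  have hBA : S.comb (Bs 0) e = S.comb (As 0) e :=
    hc (1/3) (by norm_num) (by norm_num) _ _ _ (by rw [← hfin1, hfin2])
  have hx0 : S.comb (As 0) e = x 0 := by
    rw [hAs0, comb_dirac]
    have h1 : e (2*0+1) = x (ns 0) := he_odd 0
    rw [show (1:ℕ) = 2*0+1 by norm_num, h1, hns0]
  calc x 0 = S.comb (As 0) e := hx0.symm
  _ = S.comb (Bs 0) e := hBA.symm
  _ = S.comb (Cw 0) e := by rw [hBs0]
  _ = S.comb w y := hceq.symm
  _ = S.comb (fun i => lam i * ∏ j ∈ Finset.range i, mu j) y := rfl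
end
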